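/- arXiv:2007.13095 — 7 statements merged into one kernel-verified Lean document; each statement's English description precedes it below -/
import Mathlib

section
/- Let G be a connected graph on vertex set {1,...,n} with n ≥ 2, Φ = (F_1,...,F_n) with |V(F_i)| ≥ 2 for all i, and let D be a minimum dominating set (or minimum total dominating set) of G[Φ]. Then |D ∩ V(F_i)| ≤ 2 for all i ∈ [n]. -/
open scoped Classical

/-- A dominating set: every vertex is in `D` or adjacent to a vertex of `D`. -/
def isDominatingSet {V : Type*} (H : SimpleGraph V) (D : Finset V) : Prop :=
  ∀ v : V, v ∈ D ∨ ∃ u ∈ D, H.Adj u v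

/-- A total dominating set: every vertex has a neighbor in `D`. -/
def isTotalDominatingSet {V : Type*} (H : SimpleGraph V) (D : Finset V) : Prop :=
  ∀ v : V, ∃ u ∈ D, H.Adj u v

def isMinimalDominatingSet {V : Type*} (H : SimpleGraph V) (D : Finset V) : Prop :=
  isDominatingSet H D ∧ ∀ D' : Finset V, D' ⊂ D → ¬ isDominatingSet H D'

def isMinimalTotalDominatingSet {V : Type*} (H : SimpleGraph V) (D : Finset V) : Prop :=
  isTotalDominatingSet H D ∧ ∀ D' : Finset V, D' ⊂ D → ¬ isTotalDominatingSet H D'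

noncomputable def domNum {V : Type*} (H : SimpleGraph V) : ℕ :=
  sInf {k | ∃ D : Finset V, isDominatingSet H D ∧ D.card = k}

noncomputable def totalDomNum {V : Type*} (H : SimpleGraph V) : ℕ :=
  sInf {k | ∃ D : Finset V, isTotalDominatingSet H D ∧ D.card = k}

noncomputable def upperDomNum {V : Type*} (H : SimpleGraph V) : ℕ :=
  sSup {k | ∃ D : Finset V, isMinimalDominatingSet H D ∧ D.card = k}

noncomputable def upperTotalDomNum {V : Type*} (H : SimpleGraph V) : ℕ :=
  sSup {k | ∃ D : Finset V, isMinimalTotalDominatingSet H D ∧ D.card = k}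

/-- Well (γ-)dominated: all minimal dominating sets have the same size. -/
def WellDominated {V : Type*} (H : SimpleGraph V) : Prop :=
  ∀ D₁ D₂ : Finset V, isMinimalDominatingSet H D₁ → isMinimalDominatingSet H D₂ →
    D₁.card = D₂.card

/-- Well γ_t-dominated: all minimal total dominating sets have the same size. -/
def WellTotalDominated {V : Type*} (H : SimpleGraph V) : Prop :=
  ∀ D₁ D₂ : Finset V, isMinimalTotalDominatingSet H D₁ → isMinimalTotalDominatingSet H D₂ →
    D₁.card = D₂.card

/-- Restrained dominating set: dominating and every vertex outside `D` has a
neighbor outside `D`. -/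
def isRestrainedDominatingSet {V : Type*} (H : SimpleGraph V) (D : Finset V) : Prop :=
  isDominatingSet H D ∧ ∀ v ∉ D, ∃ u ∉ D, H.Adj u v

/-- Outer-connected dominating set: dominating and the subgraph induced by the
complement of `D` is connected. -/
def isOuterConnectedDominatingSet {V : Type*} (H : SimpleGraph V) (D : Finset V) : Prop :=
  isDominatingSet H D ∧ (H.induce ((↑D : Set V)ᶜ)).Connected

def isTotalRestrainedDominatingSet {V : Type*} (H : SimpleGraph V) (D : Finset V) : Prop :=
  isTotalDominatingSet H D ∧ ∀ v ∉ D, ∃ u ∉ D, H.Adj u v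

def isTotalOuterConnectedDominatingSet {V : Type*} (H : SimpleGraph V) (D : Finset V) : Prop :=
  isTotalDominatingSet H D ∧ (H.induce ((↑D : Set V)ᶜ)).Connected

noncomputable def restrainedDomNum {V : Type*} (H : SimpleGraph V) : ℕ :=
  sInf {k | ∃ D : Finset V, isRestrainedDominatingSet H D ∧ D.card = k}

noncomputable def ocDomNum {V : Type*} (H : SimpleGraph V) : ℕ :=
  sInf {k | ∃ D : Finset V, isOuterConnectedDominatingSet H D ∧ D.card = k}

noncomputable def totalRestrainedDomNum {V : Type*} (H : SimpleGraph V) : ℕ :=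
  sInf {k | ∃ D : Finset V, isTotalRestrainedDominatingSet H D ∧ D.card = k}

noncomputable def totalOcDomNum {V : Type*} (H : SimpleGraph V) : ℕ :=
  sInf {k | ∃ D : Finset V, isTotalOuterConnectedDominatingSet H D ∧ D.card = k}

/-- Paired dominating set: dominating and the induced subgraph on `D` has a
perfect matching. -/
def isPairedDominatingSet {V : Type*} (H : SimpleGraph V) (D : Finset V) : Prop :=
  isDominatingSet H D ∧
    ∃ M : SimpleGraph.Subgraph (H.induce (↑D : Set V)), M.IsPerfectMatching

noncomputable def pairedDomNum {V : Type*} (H : SimpleGraph V) : ℕ :=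
  sInf {k | ∃ D : Finset V, isPairedDominatingSet H D ∧ D.card = k}

def isIndependentSet {V : Type*} (H : SimpleGraph V) (D : Finset V) : Prop :=
  ∀ u ∈ D, ∀ v ∈ D, ¬ H.Adj u v

def isMaximalIndependentSet {V : Type*} (H : SimpleGraph V) (D : Finset V) : Prop :=
  isIndependentSet H D ∧ ∀ D' : Finset V, D ⊂ D' → ¬ isIndependentSet H D'

/-- The independent domination number `i(H)`. -/
noncomputable def indepDomNum {V : Type*} (H : SimpleGraph V) : ℕ :=
  sInf {k | ∃ D : Finset V, isMaximalIndependentSet H D ∧ D.card = k}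

/-- The independence number `β₀(H)`. -/
noncomputable def indepNum {V : Type*} (H : SimpleGraph V) : ℕ :=
  sSup {k | ∃ D : Finset V, isIndependentSet H D ∧ D.card = k}

/-- An efficient dominating set: every vertex is dominated by exactly one
member of `D`. -/
def isEfficientDominatingSet {V : Type*} (H : SimpleGraph V) (D : Finset V) : Prop :=
  ∀ v : V, ∃! u : V, u ∈ D ∧ (u = v ∨ H.Adj u v)

/-- The generalized lexicographic product `G[Φ]` of a graph `G` on `Fin n` and a
family `Φ = (F 0, …, F (n-1))` of pairwise disjoint graphs: the `F i` are induced
subgraphs, and vertices in distinct `F i`, `F j` are adjacent iff `i j ∈ E(G)`. -/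
def GLP {n : ℕ} (G : SimpleGraph (Fin n)) {V : Fin n → Type*}
    (F : ∀ i, SimpleGraph (V i)) : SimpleGraph (Σ i, V i) where
  Adj x y := (x.1 ≠ y.1 ∧ G.Adj x.1 y.1) ∨ ∃ h : x.1 = y.1, (F y.1).Adj (h ▸ x.2) y.2
  symm := by
    constructor
    rintro ⟨i, a⟩ ⟨j, b⟩ (⟨hne, hadj⟩ | ⟨h, hadj⟩)
    · exact Or.inl ⟨fun hh => hne hh.symm, hadj.symm⟩
    · dsimp only at h
      subst h
      exact Or.inr ⟨rfl, hadj.symm⟩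
  loopless := by
    constructor
    rintro ⟨i, a⟩ (⟨hne, _⟩ | ⟨h, hadj⟩)
    · exact hne rfl
    · exact (F i).irrefl hadj

/-- The number of vertices of `D ∩ V(F i)`. -/
noncomputable def layerCount {n : ℕ} {V : Fin n → Type*} [∀ i, Fintype (V i)]
    (D : Finset (Σ i, V i)) (i : Fin n) : ℕ :=
  (D.filter (fun x => x.1 = i)).card

/-- If `|V(F i)| ≥ 2` for all `i` and `D` is a minimum dominating set or a
minimum total dominating set of `G[Φ]`, then `|D ∩ V(F i)| ≤ 2` for all `i`. -/
theorem stmt_6 {n : ℕ} (hn : 2 ≤ n) (G : SimpleGraph (Fin n)) (hG : G.Connected)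
    (V : Fin n → Type) [∀ i, Fintype (V i)] (F : ∀ i, SimpleGraph (V i))
    (hV : ∀ i, 2 ≤ Fintype.card (V i)) (D : Finset (Σ i, V i))
    (hD : (isDominatingSet (GLP G F) D ∧ D.card = domNum (GLP G F)) ∨
      (isTotalDominatingSet (GLP G F) D ∧ D.card = totalDomNum (GLP G F))) :
    ∀ i, layerCount D i ≤ 2 := by
  intro i
  by_contra hlt
  push_neg at hlt
  have hne : ∀ k, Nonempty (V k) := fun k => Fintype.card_pos_iff.mp (by have := hV k; omega)
  obtain ⟨j, hij⟩ : ∃ j, G.Adj i j := by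
    obtain ⟨k, hk⟩ : ∃ k : Fin n, k ≠ i :=
      Fintype.exists_ne_of_one_lt_card (by rw [Fintype.card_fin]; omega) i
    obtain ⟨p⟩ := hG.preconnected i k
    cases p with
    | nil => exact absurd rfl hk.symm
    | cons h _ => exact ⟨_, h⟩
  obtain ⟨u⟩ := hne i
  obtain ⟨w⟩ := hne j
  set L := D.filter (fun x => x.1 = i) with hL
  set D' : Finset (Σ k, V k) := insert ⟨i, u⟩ (insert ⟨j, w⟩ (D \ L)) with hD'
  have hcard : D'.card < D.card := by
    have hLsub : L ⊆ D := Finset.filter_subset _ _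
    have h1 : (D \ L).card = D.card - L.card := Finset.card_sdiff_of_subset hLsub
    have h2 : D'.card ≤ (D \ L).card + 2 := by
      calc D'.card ≤ (insert (⟨j, w⟩ : Σ k, V k) (D \ L)).card + 1 :=
            Finset.card_insert_le _ _
        _ ≤ (D \ L).card + 1 + 1 := by
            have := Finset.card_insert_le (⟨j, w⟩ : Σ k, V k) (D \ L); omega
    have h3 : 3 ≤ L.card := hlt
    have h4 : L.card ≤ D.card := Finset.card_le_card hLsub
    omega
  have hwD' : (⟨j, w⟩ : Σ k, V k) ∈ D' := by simp [hD']
  have huD' : (⟨i, u⟩ : Σ k, V k) ∈ D' := by simp [hD']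
  have adjw : ∀ v : V i, (GLP G F).Adj ⟨j, w⟩ ⟨i, v⟩ := fun v =>
    Or.inl ⟨hij.ne', hij.symm⟩
  have key : ∀ v : (Σ k, V k), ∀ u' ∈ D, (GLP G F).Adj u' v →
      ∃ x ∈ D', (GLP G F).Adj x v := by
    rintro ⟨k, v⟩ ⟨k', v'⟩ hmem hadj
    by_cases hk' : k' = i
    · obtain rfl := hk'.symm
      by_cases hk : k = i
      · obtain rfl := hk.symm
        exact ⟨⟨j, w⟩, hwD', adjw v⟩
      · have hGik : G.Adj i k := by
          rcases hadj with ⟨_, h⟩ | ⟨h, _⟩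
          · exact h
          · exact absurd h.symm hk
        exact ⟨⟨i, u⟩, huD', Or.inl ⟨hGik.ne, hGik⟩⟩
    · refine ⟨⟨k', v'⟩, ?_, hadj⟩
      simp only [hD', Finset.mem_insert, Finset.mem_sdiff, hL, Finset.mem_filter]
      tauto
  rcases hD with ⟨hdom, hmin⟩ | ⟨hdom, hmin⟩
  · have hdom' : isDominatingSet (GLP G F) D' := by
      rintro ⟨k, v⟩
      rcases hdom ⟨k, v⟩ with hv | ⟨u', hu', hadj⟩
      · by_cases hk : k = i
        · obtain rfl := hk.symm
          exact Or.inr ⟨⟨j, w⟩, hwD', adjw v⟩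
        · refine Or.inl ?_
          simp only [hD', Finset.mem_insert, Finset.mem_sdiff, hL, Finset.mem_filter]
          tauto
      · exact Or.inr (key _ _ hu' hadj)
    have : domNum (GLP G F) ≤ D'.card :=
      Nat.sInf_le ⟨D', hdom', rfl⟩
    omega
  · have hdom' : isTotalDominatingSet (GLP G F) D' := by
      intro v
      obtain ⟨u', hu', hadj⟩ := hdom v
      exact key _ _ hu' hadj
    have : totalDomNum (GLP G F) ≤ D'.card :=
      Nat.sInf_le ⟨D', hdom', rfl⟩
    omega
end

section
/- Let G be a connected graph on vertex set {1,...,n} with n ≥ 2, Φ = (F_1,...,F_n) with |V(F_i)| ≥ 2 for all i, and let D be a minimum dominating set of G[Φ]. If |D ∩ V(F_s)| = 2 for some s, then no vertex of F_s is adjacent in G[Φ] to a vertex of D − V(F_s), and D ∩ V(F_s) is a minimum dominating set of F_s. -/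
open scoped Classical

lemma replace_aux {n : ℕ} (G : SimpleGraph (Fin n))
    {V : Fin n → Type} [∀ i, Fintype (V i)] (F : ∀ i, SimpleGraph (V i))
    (D : Finset (Σ i, V i))
    (hD : isDominatingSet (GLP G F) D) (hDmin : D.card = domNum (GLP G F))
    (s : Fin n) (hs : layerCount D s = 2) (b : V s)
    (hb : ∀ x : V s, x = b ∨ (F s).Adj b x ∨ ∃ u ∈ D, u.1 ≠ s ∧ (GLP G F).Adj u ⟨s, x⟩) :
    False := by
  classical
  set D' : Finset (Σ i, V i) := insert ⟨s, b⟩ (D.filter fun x => x.1 ≠ s) with hD'def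
  have hdom' : isDominatingSet (GLP G F) D' := by
    rintro ⟨i, x⟩
    by_cases hi : i = s
    · subst hi
      rcases hb x with h | h | ⟨u, hu, hus, hadj⟩
      · subst h; exact Or.inl (Finset.mem_insert_self _ _)
      · exact Or.inr ⟨⟨i, b⟩, Finset.mem_insert_self _ _, Or.inr ⟨rfl, h⟩⟩
      · exact Or.inr ⟨u, Finset.mem_insert_of_mem (Finset.mem_filter.2 ⟨hu, hus⟩), hadj⟩
    · rcases hD ⟨i, x⟩ with h | ⟨u, hu, hadj⟩
      · exact Or.inl (Finset.mem_insert_of_mem (Finset.mem_filter.2 ⟨h, hi⟩))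
      · by_cases hus : u.1 = s
        · rcases hadj with ⟨hne, hGadj⟩ | ⟨heq, _⟩
          · refine Or.inr ⟨⟨s, b⟩, Finset.mem_insert_self _ _, Or.inl ⟨?_, ?_⟩⟩
            · exact fun hh => hi hh.symm
            · rwa [hus] at hGadj
          · exact absurd (hus ▸ heq : (s : Fin n) = i) (fun hh => hi hh.symm)
        · exact Or.inr ⟨u, Finset.mem_insert_of_mem (Finset.mem_filter.2 ⟨hu, hus⟩), hadj⟩
  have hsplit : (D.filter fun x : Σ i, V i => x.1 = s).card
      + (D.filter fun x : Σ i, V i => x.1 ≠ s).card = D.card :=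
    Finset.card_filter_add_card_filter_not _
  have hfc : (D.filter fun x : Σ i, V i => x.1 = s).card = 2 := hs
  have hcard' : D'.card < D.card := by
    have h1 : D'.card ≤ (D.filter fun x : Σ i, V i => x.1 ≠ s).card + 1 :=
      Finset.card_insert_le _ _
    omega
  have hle : domNum (GLP G F) ≤ D'.card := Nat.sInf_le ⟨D', hdom', rfl⟩
  omega

/-- If `D` is a minimum dominating set of `G[Φ]` and `|D ∩ V(F s)| = 2`, then no
vertex of `F s` is adjacent to a vertex of `D − V(F s)`, and `D ∩ V(F s)` is a
minimum dominating set of `F s`. -/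
theorem stmt_7 {n : ℕ} (hn : 2 ≤ n) (G : SimpleGraph (Fin n)) (hG : G.Connected)
    (V : Fin n → Type) [∀ i, Fintype (V i)] (F : ∀ i, SimpleGraph (V i))
    (hV : ∀ i, 2 ≤ Fintype.card (V i)) (D : Finset (Σ i, V i))
    (hD : isDominatingSet (GLP G F) D) (hDmin : D.card = domNum (GLP G F))
    (s : Fin n) (hs : layerCount D s = 2) :
    (∀ x : V s, ∀ y ∈ D, y.1 ≠ s → ¬ (GLP G F).Adj y ⟨s, x⟩) ∧
    isDominatingSet (F s) (Finset.univ.filter fun a => (⟨s, a⟩ : Σ i, V i) ∈ D) ∧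
    (Finset.univ.filter fun a => (⟨s, a⟩ : Σ i, V i) ∈ D).card = domNum (F s) := by
  classical
  have hne : Nonempty (V s) := Fintype.card_pos_iff.mp (by have := hV s; omega)
  obtain ⟨b₀⟩ := hne
  -- Claim 1
  have claim1 : ∀ x : V s, ∀ y ∈ D, y.1 ≠ s → ¬ (GLP G F).Adj y ⟨s, x⟩ := by
    intro x y hy hys hadj
    have hG' : G.Adj y.1 s := by
      rcases hadj with ⟨_, h⟩ | ⟨heq, _⟩
      · exact h
      · exact absurd heq hys
    exact replace_aux G F D hD hDmin s hs b₀
      (fun x' => Or.inr (Or.inr ⟨y, hy, hys, Or.inl ⟨hys, hG'⟩⟩))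
  -- Claim 2
  set Ds : Finset (V s) := Finset.univ.filter fun a => (⟨s, a⟩ : Σ i, V i) ∈ D with hDs
  have claim2 : isDominatingSet (F s) Ds := by
    intro x
    rcases hD ⟨s, x⟩ with h | ⟨u, hu, hadj⟩
    · exact Or.inl (Finset.mem_filter.2 ⟨Finset.mem_univ _, h⟩)
    · obtain ⟨i, a⟩ := u
      have his : i = s := by
        by_contra hne'
        exact claim1 x ⟨i, a⟩ hu hne' hadj
      subst his
      rcases hadj with ⟨hne', _⟩ | ⟨_, hadj'⟩
      · exact absurd rfl hne'
      · exact Or.inr ⟨a, Finset.mem_filter.2 ⟨Finset.mem_univ _, hu⟩, hadj'⟩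
  -- card of Ds is 2
  have hcardDs : Ds.card = 2 := by
    rw [← hs]
    unfold layerCount
    apply Finset.card_bij (fun a _ => (⟨s, a⟩ : Σ i, V i))
    · intro a ha
      exact Finset.mem_filter.2 ⟨(Finset.mem_filter.1 ha).2, rfl⟩
    · intro a _ a' _ h
      exact eq_of_heq (Sigma.mk.inj_iff.mp h).2
    · rintro ⟨i, x⟩ hx
      obtain ⟨hxD, (rfl : i = s)⟩ := Finset.mem_filter.1 hx
      exact ⟨x, Finset.mem_filter.2 ⟨Finset.mem_univ _, hxD⟩, rfl⟩
  refine ⟨claim1, claim2, ?_⟩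
  rw [hcardDs]
  have hle : domNum (F s) ≤ 2 := Nat.sInf_le ⟨Ds, claim2, hcardDs⟩
  have hge : 2 ≤ domNum (F s) := by
    by_contra hlt
    push_neg at hlt
    have hmem : domNum (F s) ∈ {k | ∃ D₀ : Finset (V s), isDominatingSet (F s) D₀ ∧ D₀.card = k} :=
      Nat.sInf_mem ⟨2, Ds, claim2, hcardDs⟩
    obtain ⟨D₀, hdom₀, hcard₀⟩ := hmem
    interval_cases h : domNum (F s)
    · have hD₀ : D₀ = ∅ := Finset.card_eq_zero.mp hcard₀
      rcases hdom₀ b₀ with hmem' | ⟨u, hu, _⟩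
      · simp [hD₀] at hmem'
      · simp [hD₀] at hu
    · obtain ⟨b, hb⟩ := Finset.card_eq_one.mp hcard₀
      subst hb
      refine replace_aux G F D hD hDmin s hs b (fun x => ?_)
      rcases hdom₀ x with hmem' | ⟨u, hu, hadj⟩
      · exact Or.inl (Finset.mem_singleton.1 hmem')
      · rw [Finset.mem_singleton] at hu
        subst hu
        exact Or.inr (Or.inl hadj)
  omega
end

section
/- Let G be a connected graph on vertex set {1,...,n} with n ≥ 2 and Φ = (F_1,...,F_n) with |V(F_i)| ≥ 2 for all i. Then G[Φ] has a minimum dominating set U with |U ∩ V(F_i)| ≤ 1 for all i ∈ [n] such that the subgraph induced by V(G[Φ]) − U is connected and has no isolated vertices; consequently γ(G[Φ]) = γ_r(G[Φ]) = γ^{oc}(G[Φ]). -/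
open scoped Classical

section AuxStmt9
set_option linter.unusedSectionVars false

variable {n : ℕ} {G : SimpleGraph (Fin n)} {V : Fin n → Type} [∀ i, Fintype (V i)]
  {F : ∀ i, SimpleGraph (V i)}

lemma glp_adj_of_G {x y : Σ i, V i} (h1 : x.1 ≠ y.1) (h2 : G.Adj x.1 y.1) :
    (GLP G F).Adj x y := Or.inl ⟨h1, h2⟩

lemma exists_adj_of_connected (hn : 2 ≤ n) (hG : G.Connected) (i : Fin n) :
    ∃ j, G.Adj i j := by
  obtain ⟨i', hi'⟩ := Fintype.exists_ne_of_one_lt_card (by simp; omega) i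
  obtain ⟨p⟩ := hG.preconnected i i'
  cases p with
  | nil => exact absurd rfl hi'.symm
  | cons h p => exact ⟨_, h⟩

lemma exists_not_mem_layer (hV : ∀ i, 2 ≤ Fintype.card (V i)) {U : Finset (Σ i, V i)}
    (hU : ∀ i, layerCount U i ≤ 1) (j : Fin n) :
    ∃ b : V j, (⟨j, b⟩ : Σ i, V i) ∉ U := by
  have hc := hV j
  obtain ⟨a⟩ := Fintype.card_pos_iff.mp (by omega : 0 < Fintype.card (V j))
  obtain ⟨b, hb⟩ := Fintype.exists_ne_of_one_lt_card (by omega) a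
  by_contra h
  push_neg at h
  have h2 : 1 < (U.filter (fun x => x.1 = j)).card := by
    apply Finset.one_lt_card.mpr
    refine ⟨⟨j, a⟩, Finset.mem_filter.mpr ⟨h a, rfl⟩,
      ⟨j, b⟩, Finset.mem_filter.mpr ⟨h b, rfl⟩, ?_⟩
    simp [Sigma.mk.inj_iff, hb.symm]
  have := hU j
  rw [layerCount] at this
  omega

lemma induce_adj_of_glp {U : Finset (Σ i, V i)}
    {v u : ((↑U : Set (Σ i, V i))ᶜ : Set (Σ i, V i))}
    (h1 : v.1.1 ≠ u.1.1) (h2 : G.Adj v.1.1 u.1.1) :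
    ((GLP G F).induce ((↑U : Set (Σ i, V i))ᶜ)).Adj v u := by
  have : (GLP G F).Adj v.1 u.1 := glp_adj_of_G h1 h2
  exact this

lemma reach_aux (hV : ∀ i, 2 ≤ Fintype.card (V i)) {U : Finset (Σ i, V i)}
    (hU : ∀ i, layerCount U i ≤ 1) (hn : 2 ≤ n) (hG : G.Connected) :
    ∀ {a b : Fin n}, G.Walk a b →
      ∀ (v u : ((↑U : Set (Σ i, V i))ᶜ : Set (Σ i, V i))), v.1.1 = a → u.1.1 = b →
      ((GLP G F).induce ((↑U : Set (Σ i, V i))ᶜ)).Reachable v u := by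
  intro a b p
  induction p with
  | nil =>
    rename_i a0
    intro v u hv hu
    by_cases hvu : v = u
    · exact hvu ▸ SimpleGraph.Reachable.refl v
    · obtain ⟨j, hj⟩ := exists_adj_of_connected hn hG a0
      obtain ⟨c, hc⟩ := exists_not_mem_layer hV hU j
      have hw : (⟨j, c⟩ : Σ i, V i) ∈ ((↑U : Set (Σ i, V i))ᶜ) := hc
      have h1 := induce_adj_of_glp (F := F) (v := v) (u := ⟨⟨j, c⟩, hw⟩)
        (by rw [hv]; exact hj.ne) (by rw [hv]; exact hj)
      have h2 := induce_adj_of_glp (F := F) (v := (⟨⟨j, c⟩, hw⟩ : ((↑U : Set (Σ i, V i))ᶜ : Set (Σ i, V i)))) (u := u)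
        (by rw [hu]; exact hj.ne') (by rw [hu]; exact hj.symm)
      exact h1.reachable.trans h2.reachable
  | cons h q ih =>
    rename_i a' c' b'
    intro v u hv hu
    obtain ⟨x, hx⟩ := exists_not_mem_layer hV hU c'
    have hw : (⟨c', x⟩ : Σ i, V i) ∈ ((↑U : Set (Σ i, V i))ᶜ) := hx
    have h1 := induce_adj_of_glp (F := F) (v := v) (u := ⟨⟨c', x⟩, hw⟩)
      (by rw [hv]; exact h.ne) (by rw [hv]; exact h)
    exact h1.reachable.trans (ih ⟨⟨c', x⟩, hw⟩ u rfl hu)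
lemma exists_good_min_dom (hn : 2 ≤ n) (hG : G.Connected)
    (hV : ∀ i, 2 ≤ Fintype.card (V i)) :
    ∃ U : Finset (Σ i, V i), isDominatingSet (GLP G F) U ∧
      U.card = domNum (GLP G F) ∧ ∀ i, layerCount U i ≤ 1 := by
  classical
  set H := GLP G F with hH
  have huniv : isDominatingSet H (Finset.univ : Finset (Σ i, V i)) :=
    fun v => Or.inl (Finset.mem_univ v)
  have hSne : {k | ∃ D : Finset (Σ i, V i), isDominatingSet H D ∧ D.card = k}.Nonempty :=
    ⟨_, _, huniv, rfl⟩
  have hdomle : ∀ D : Finset (Σ i, V i), isDominatingSet H D → domNum H ≤ D.card :=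
    fun D hD => Nat.sInf_le ⟨D, hD, rfl⟩
  obtain ⟨D₀, hD₀, hD₀c⟩ := Nat.sInf_mem hSne
  set γ := domNum H with hγ
  set T : Set ℕ := {s | ∃ D : Finset (Σ i, V i), isDominatingSet H D ∧ D.card = γ ∧
    (D.image Sigma.fst).card = s} with hT
  have hTne : T.Nonempty := ⟨_, D₀, hD₀, hD₀c, rfl⟩
  have hTbdd : BddAbove T := by
    refine ⟨n, fun s hs => ?_⟩
    obtain ⟨D, _, _, hsc⟩ := hs
    calc s = (D.image Sigma.fst).card := hsc.symm
      _ ≤ Fintype.card (Fin n) := Finset.card_le_univ _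
      _ = n := Fintype.card_fin n
  obtain ⟨U, hUdom, hUc, hUim⟩ := Nat.sSup_mem hTne hTbdd
  refine ⟨U, hUdom, hUc, ?_⟩
  intro i
  by_contra hbad
  have h2 : 1 < (U.filter (fun x => x.1 = i)).card := by
    rw [layerCount] at hbad; omega
  obtain ⟨x, hxm, y, hym, hxy⟩ := Finset.one_lt_card.mp h2
  obtain ⟨hxU, hx1⟩ := Finset.mem_filter.mp hxm
  obtain ⟨hyU, hy1⟩ := Finset.mem_filter.mp hym
  have hγ1 : 1 ≤ γ := by
    rw [← hUc]; exact Finset.card_pos.mpr ⟨y, hyU⟩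
  by_cases hA : ∃ z ∈ U, G.Adj i z.1
  · -- some layer adjacent to i already contains a vertex of U: drop y
    obtain ⟨z, hzU, hzadj⟩ := hA
    have hzi : z.1 ≠ i := fun hh => (G.irrefl (hh ▸ hzadj))
    have hzy : z ≠ y := fun hh => hzi (hh ▸ hy1)
    have hdom' : isDominatingSet H (U.erase y) := by
      intro v
      rcases hUdom v with hvU | ⟨u, huU, hadj⟩
      · by_cases hvy : v = y
        · subst hvy
          refine Or.inr ⟨z, Finset.mem_erase.mpr ⟨hzy, hzU⟩, ?_⟩
          exact glp_adj_of_G (hy1 ▸ hzi) (by rw [hy1]; exact hzadj.symm)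
        · exact Or.inl (Finset.mem_erase.mpr ⟨hvy, hvU⟩)
      · by_cases huy : u = y
        · subst huy
          rcases hadj with ⟨hne, hGa⟩ | ⟨heq, _⟩
          · refine Or.inr ⟨x, Finset.mem_erase.mpr ⟨hxy, hxU⟩, ?_⟩
            refine glp_adj_of_G ?_ ?_
            · rw [hx1, ← hy1]; exact hne
            · rw [hx1, ← hy1]; exact hGa
          · refine Or.inr ⟨z, Finset.mem_erase.mpr ⟨hzy, hzU⟩, ?_⟩
            refine glp_adj_of_G ?_ ?_
            · rw [← heq, hy1]; exact hzi
            · rw [← heq, hy1]; exact hzadj.symm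
        · exact Or.inr ⟨u, Finset.mem_erase.mpr ⟨huy, huU⟩, hadj⟩
    have := hdomle _ hdom'
    rw [Finset.card_erase_of_mem hyU, hUc] at this
    omega
  · -- no layer adjacent to i meets U: swap y for a vertex in a fresh neighboring layer
    push_neg at hA
    obtain ⟨j, hj⟩ := exists_adj_of_connected hn hG i
    have hjU : ∀ z ∈ U, z.1 ≠ j := by
      intro z hz hzj
      exact hA z hz (hzj ▸ hj)
    have hcj := hV j
    obtain ⟨b⟩ := Fintype.card_pos_iff.mp (by omega : 0 < Fintype.card (V j))
    set w : Σ i, V i := ⟨j, b⟩ with hw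
    have hwU : w ∉ U.erase y := fun hh => hjU w (Finset.mem_of_mem_erase hh) rfl
    set D' := insert w (U.erase y) with hD'
    have hdom' : isDominatingSet H D' := by
      intro v
      rcases hUdom v with hvU | ⟨u, huU, hadj⟩
      · by_cases hvy : v = y
        · subst hvy
          refine Or.inr ⟨w, Finset.mem_insert_self _ _, ?_⟩
          refine glp_adj_of_G ?_ ?_
          · rw [hy1]; exact hj.ne'
          · rw [hy1]; exact hj.symm
        · exact Or.inl (Finset.mem_insert_of_mem (Finset.mem_erase.mpr ⟨hvy, hvU⟩))
      · by_cases huy : u = y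
        · subst huy
          rcases hadj with ⟨hne, hGa⟩ | ⟨heq, _⟩
          · refine Or.inr ⟨x, Finset.mem_insert_of_mem (Finset.mem_erase.mpr ⟨hxy, hxU⟩), ?_⟩
            refine glp_adj_of_G ?_ ?_
            · rw [hx1, ← hy1]; exact hne
            · rw [hx1, ← hy1]; exact hGa
          · refine Or.inr ⟨w, Finset.mem_insert_self _ _, ?_⟩
            refine glp_adj_of_G ?_ ?_
            · show j ≠ v.1; rw [← heq, hy1]; exact hj.ne'
            · show G.Adj j v.1; rw [← heq, hy1]; exact hj.symm
        · exact Or.inr ⟨u, Finset.mem_insert_of_mem (Finset.mem_erase.mpr ⟨huy, huU⟩), hadj⟩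
    have hD'c : D'.card = γ := by
      rw [hD', Finset.card_insert_of_notMem hwU, Finset.card_erase_of_mem hyU, hUc]
      omega
    have hsub : U.image Sigma.fst ⊆ D'.image Sigma.fst := by
      intro k hk
      obtain ⟨z, hzU, hzk⟩ := Finset.mem_image.mp hk
      by_cases hzy : z = y
      · refine Finset.mem_image.mpr ⟨x, Finset.mem_insert_of_mem
          (Finset.mem_erase.mpr ⟨hxy, hxU⟩), ?_⟩
        rw [hx1, ← hy1, ← hzy, hzk]
      · exact Finset.mem_image.mpr ⟨z, Finset.mem_insert_of_mem
          (Finset.mem_erase.mpr ⟨hzy, hzU⟩), hzk⟩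
    have hjD' : j ∈ D'.image Sigma.fst :=
      Finset.mem_image.mpr ⟨w, Finset.mem_insert_self _ _, rfl⟩
    have hjnU : j ∉ U.image Sigma.fst := by
      intro hh
      obtain ⟨z, hzU, hzj⟩ := Finset.mem_image.mp hh
      exact hjU z hzU hzj
    have hlt : (U.image Sigma.fst).card < (D'.image Sigma.fst).card :=
      Finset.card_lt_card (Finset.ssubset_iff_of_subset hsub |>.mpr ⟨j, hjD', hjnU⟩)
    have hle : (D'.image Sigma.fst).card ≤ (U.image Sigma.fst).card := by
      rw [hUim]
      exact le_csSup hTbdd ⟨D', hdom', hD'c, rfl⟩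
    omega
end AuxStmt9

/-- If `|V(F i)| ≥ 2` for all `i`, then `G[Φ]` has a minimum dominating set `U`
meeting each `V(F i)` at most once whose complement induces a connected graph
with no isolated vertices; consequently `γ(G[Φ]) = γ_r(G[Φ]) = γ^{oc}(G[Φ])`. -/
theorem stmt_9 {n : ℕ} (hn : 2 ≤ n) (G : SimpleGraph (Fin n)) (hG : G.Connected)
    (V : Fin n → Type) [∀ i, Fintype (V i)] (F : ∀ i, SimpleGraph (V i))
    (hV : ∀ i, 2 ≤ Fintype.card (V i)) :
    (∃ U : Finset (Σ i, V i),
      (isDominatingSet (GLP G F) U ∧ U.card = domNum (GLP G F)) ∧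
      (∀ i, layerCount U i ≤ 1) ∧
      (∀ v ∉ U, ∃ w ∉ U, (GLP G F).Adj w v) ∧
      ((GLP G F).induce ((↑U : Set (Σ i, V i))ᶜ)).Connected) ∧
    domNum (GLP G F) = restrainedDomNum (GLP G F) ∧
    domNum (GLP G F) = ocDomNum (GLP G F) := by
  classical
  obtain ⟨U, hUdom, hUcard, hU1⟩ := exists_good_min_dom (F := F) hn hG hV
  -- restrained condition
  have hres : ∀ v ∉ U, ∃ w ∉ U, (GLP G F).Adj w v := by
    intro v hv
    obtain ⟨j, hj⟩ := exists_adj_of_connected hn hG v.1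
    obtain ⟨c, hc⟩ := exists_not_mem_layer hV hU1 j
    exact ⟨⟨j, c⟩, hc, glp_adj_of_G hj.ne' hj.symm⟩
  -- connectivity of the complement
  have hconn : ((GLP G F).induce ((↑U : Set (Σ i, V i))ᶜ)).Connected := by
    have hne : Nonempty ((↑U : Set (Σ i, V i))ᶜ : Set (Σ i, V i)) := by
      obtain ⟨c, hc⟩ := exists_not_mem_layer hV hU1 ⟨0, by omega⟩
      exact ⟨⟨⟨_, c⟩, hc⟩⟩
    refine SimpleGraph.Connected.mk ?_
    intro v u
    obtain ⟨p⟩ := hG.preconnected v.1.1 u.1.1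
    exact reach_aux hV hU1 hn hG p v u rfl rfl
  refine ⟨⟨U, ⟨hUdom, hUcard⟩, hU1, hres, hconn⟩, ?_, ?_⟩
  · -- domNum = restrainedDomNum
    have h1 : restrainedDomNum (GLP G F) ≤ domNum (GLP G F) := by
      rw [← hUcard]
      exact Nat.sInf_le ⟨U, ⟨hUdom, hres⟩, rfl⟩
    have h2 : domNum (GLP G F) ≤ restrainedDomNum (GLP G F) := by
      obtain ⟨D, hD, hDc⟩ := Nat.sInf_mem
        (⟨U.card, U, ⟨hUdom, hres⟩, rfl⟩ :
          {k | ∃ D : Finset (Σ i, V i),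
            isRestrainedDominatingSet (GLP G F) D ∧ D.card = k}.Nonempty)
      rw [restrainedDomNum, ← hDc]
      exact Nat.sInf_le ⟨D, hD.1, rfl⟩
    omega
  · -- domNum = ocDomNum
    have h1 : ocDomNum (GLP G F) ≤ domNum (GLP G F) := by
      rw [← hUcard]
      exact Nat.sInf_le ⟨U, ⟨hUdom, hconn⟩, rfl⟩
    have h2 : domNum (GLP G F) ≤ ocDomNum (GLP G F) := by
      obtain ⟨D, hD, hDc⟩ := Nat.sInf_mem
        (⟨U.card, U, ⟨hUdom, hconn⟩, rfl⟩ :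
          {k | ∃ D : Finset (Σ i, V i),
            isOuterConnectedDominatingSet (GLP G F) D ∧ D.card = k}.Nonempty)
      rw [ocDomNum, ← hDc]
      exact Nat.sInf_le ⟨D, hD.1, rfl⟩
    omega
end

section
/- Let G be a connected graph on vertex set {1,...,n} with n ≥ 2 and Φ = (F_1,...,F_n) with γ(F_i) ≥ 2 for all i ∈ [n]. Then γ(G[Φ]) = γ_r(G[Φ]) = γ_t(G[Φ]) = γ_{tr}(G[Φ]) = γ^{oc}(G[Φ]) = γ_t^{oc}(G[Φ]). -/
open scoped Classical

/-- If `γ(F i) ≥ 2` for all `i`, then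
`γ(G[Φ]) = γ_r(G[Φ]) = γ_t(G[Φ]) = γ_{tr}(G[Φ]) = γ^{oc}(G[Φ]) = γ_t^{oc}(G[Φ])`. -/
theorem stmt_12 {n : ℕ} (hn : 2 ≤ n) (G : SimpleGraph (Fin n)) (hG : G.Connected)
    (V : Fin n → Type) [∀ i, Fintype (V i)] (F : ∀ i, SimpleGraph (V i))
    (hF : ∀ i, 2 ≤ domNum (F i)) :
    domNum (GLP G F) = restrainedDomNum (GLP G F) ∧
    restrainedDomNum (GLP G F) = totalDomNum (GLP G F) ∧
    totalDomNum (GLP G F) = totalRestrainedDomNum (GLP G F) ∧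
    totalRestrainedDomNum (GLP G F) = ocDomNum (GLP G F) ∧
    ocDomNum (GLP G F) = totalOcDomNum (GLP G F) := by
  classical
  -- every dominating set of `F i` has at least 2 elements
  have hdomle : ∀ i (D : Finset (V i)), isDominatingSet (F i) D → 2 ≤ D.card := by
    intro i D hD
    exact le_trans (hF i) (Nat.sInf_le ⟨D, hD, rfl⟩)
  have hVne : ∀ i, Nonempty (V i) := by
    intro i
    by_contra h
    have hd : isDominatingSet (F i) (∅ : Finset (V i)) := fun v => absurd ⟨v⟩ h
    have := hdomle i ∅ hd
    simp at this
  have hV2 : ∀ i, ∃ a b : V i, a ≠ b := by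
    intro i
    obtain ⟨a⟩ := hVne i
    by_contra h
    push_neg at h
    have hd : isDominatingSet (F i) {a} := fun v => Or.inl (by simp [h v a])
    have := hdomle i {a} hd
    simp at this
  have hntriv : Nontrivial (Fin n) := Fin.nontrivial_iff_two_le.mpr hn
  have hGadj : ∀ i : Fin n, ∃ j, G.Adj i j := by
    intro i
    obtain ⟨j, hj⟩ := exists_ne i
    obtain ⟨w⟩ := hG.preconnected i j
    cases w with
    | nil => exact absurd rfl hj
    | cons h p => exact ⟨_, h⟩
  -- choice functions
  let rep : ∀ i, V i := fun i => Classical.choice (hVne i)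
  let nbr : Fin n → Fin n := fun i => (hGadj i).choose
  have hnbr : ∀ i, G.Adj i (nbr i) := fun i => (hGadj i).choose_spec
  -- a minimum total dominating set of G
  have htne : (Finset.univ : Finset (Fin n)).card ∈
      {k | ∃ S : Finset (Fin n), isTotalDominatingSet G S ∧ S.card = k} :=
    ⟨Finset.univ, fun v => ⟨nbr v, Finset.mem_univ _, (hnbr v).symm⟩, rfl⟩
  obtain ⟨S, hS, hScard⟩ := Nat.sInf_mem (Set.nonempty_of_mem htne)
  -- the candidate set D: one representative in each layer of S
  set D : Finset (Σ i, V i) := S.image (fun j => ⟨j, rep j⟩) with hDdef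
  have hDcard : D.card = S.card :=
    Finset.card_image_of_injective _ (fun a b h => congrArg Sigma.fst h)
  have hmemD : ∀ (x : Σ i, V i), x ∈ D ↔ x.1 ∈ S ∧ x.2 = rep x.1 := by
    rintro ⟨i, a⟩
    simp only [hDdef, Finset.mem_image]
    constructor
    · rintro ⟨j, hj, h⟩
      obtain ⟨h1, h2⟩ := Sigma.mk.inj_iff.mp h
      subst h1
      exact ⟨hj, (eq_of_heq h2).symm⟩
    · rintro ⟨hi, ha⟩
      exact ⟨i, hi, by rw [ha]⟩
  have hfree : ∀ k, ∃ c : V k, (⟨k, c⟩ : Σ i, V i) ∉ D := by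
    intro k
    obtain ⟨a, b, hab⟩ := hV2 k
    by_cases ha : a = rep k
    · refine ⟨b, fun hb => hab ?_⟩
      exact ha.trans (show b = rep k from ((hmemD _).mp hb).2).symm
    · exact ⟨a, fun haD => ha ((hmemD _).mp haD).2⟩
  -- D is total dominating
  have hDtotal : isTotalDominatingSet (GLP G F) D := by
    rintro ⟨i, a⟩
    obtain ⟨j, hjS, hji⟩ := hS i
    exact ⟨⟨j, rep j⟩, (hmemD _).mpr ⟨hjS, rfl⟩, Or.inl ⟨hji.ne, hji⟩⟩
  have hDdom : isDominatingSet (GLP G F) D := fun v => Or.inr (hDtotal v)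
  -- D is restrained
  have hDrest : ∀ v ∉ D, ∃ u ∉ D, (GLP G F).Adj u v := by
    rintro ⟨i, a⟩ -
    obtain ⟨c, hc⟩ := hfree (nbr i)
    exact ⟨⟨nbr i, c⟩, hc, Or.inl ⟨(hnbr i).ne', (hnbr i).symm⟩⟩
  -- complement of D is connected
  have hCmem : ∀ x : Σ i, V i, x ∈ ((↑D : Set (Σ i, V i))ᶜ) ↔ x ∉ D := by
    intro x; simp
  have hDconn : ((GLP G F).induce ((↑D : Set (Σ i, V i))ᶜ)).Connected := by
    have key : ∀ (i j : Fin n) (w : G.Walk i j) (a : V i) (b : V j)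
        (ha : (⟨i, a⟩ : Σ k, V k) ∈ ((↑D : Set (Σ k, V k))ᶜ))
        (hb : (⟨j, b⟩ : Σ k, V k) ∈ ((↑D : Set (Σ k, V k))ᶜ)),
        ((GLP G F).induce ((↑D : Set (Σ k, V k))ᶜ)).Reachable ⟨⟨i, a⟩, ha⟩ ⟨⟨j, b⟩, hb⟩ := by
      intro i j w
      induction w with
      | nil =>
        intro a b ha hb
        obtain ⟨c, hc⟩ := hfree (nbr _)
        have hcC := (hCmem _).mpr hc
        have h1 : ((GLP G F).induce ((↑D : Set (Σ k, V k))ᶜ)).Adj ⟨⟨_, a⟩, ha⟩ ⟨⟨_, c⟩, hcC⟩ :=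
          Or.inl ⟨(hnbr _).ne, hnbr _⟩
        have h2 : ((GLP G F).induce ((↑D : Set (Σ k, V k))ᶜ)).Adj ⟨⟨_, c⟩, hcC⟩ ⟨⟨_, b⟩, hb⟩ :=
          Or.inl ⟨(hnbr _).ne', (hnbr _).symm⟩
        exact h1.reachable.trans h2.reachable
      | @cons u k j h p ih =>
        intro a b ha hb
        obtain ⟨c, hc⟩ := hfree k
        have hcC := (hCmem _).mpr hc
        have h1 : ((GLP G F).induce ((↑D : Set (Σ l, V l))ᶜ)).Adj ⟨⟨u, a⟩, ha⟩ ⟨⟨k, c⟩, hcC⟩ :=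
          Or.inl ⟨h.ne, h⟩
        exact h1.reachable.trans (ih c b hcC hb)
    have hne2 : Nonempty ((↑D : Set (Σ k, V k))ᶜ : Set _) := by
      obtain ⟨c, hc⟩ := hfree ⟨0, by omega⟩
      exact ⟨⟨⟨_, c⟩, (hCmem _).mpr hc⟩⟩
    rw [SimpleGraph.connected_iff]
    refine ⟨?_, hne2⟩
    rintro ⟨⟨i, a⟩, ha⟩ ⟨⟨j, b⟩, hb⟩
    obtain ⟨w⟩ := hG.preconnected i j
    exact key i j w a b ha hb
  -- lower bound: every dominating set of G[Φ] has at least S.card elements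
  have hlow : ∀ D' : Finset (Σ i, V i), isDominatingSet (GLP G F) D' → S.card ≤ D'.card := by
    intro D' hD'
    set S' := D'.image Sigma.fst with hS'def
    set B := S'.filter (fun i => ∀ j ∈ S', ¬ G.Adj j i) with hBdef
    have hT : isTotalDominatingSet G (S' ∪ B.image nbr) := by
      intro i
      have hiS' : i ∈ S' ∨ ∃ j ∈ S', G.Adj j i := by
        rcases hD' ⟨i, rep i⟩ with h | ⟨⟨k, w⟩, hkD, hadj⟩
        · exact Or.inl (Finset.mem_image_of_mem _ h)
        · rcases hadj with ⟨hne, hadj⟩ | ⟨hk, _⟩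
          · exact Or.inr ⟨k, Finset.mem_image_of_mem _ hkD, hadj⟩
          · have hki : k = i := hk
            subst hki
            exact Or.inl (Finset.mem_image_of_mem Sigma.fst hkD)
      rcases hiS' with hiS' | ⟨j, hj, hadj⟩
      · by_cases hB : ∃ j ∈ S', G.Adj j i
        · obtain ⟨j, hj, hadj⟩ := hB
          exact ⟨j, Finset.mem_union_left _ hj, hadj⟩
        · push_neg at hB
          have hiB : i ∈ B := Finset.mem_filter.mpr ⟨hiS', hB⟩
          exact ⟨nbr i, Finset.mem_union_right _ (Finset.mem_image_of_mem _ hiB),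
            (hnbr i).symm⟩
      · exact ⟨j, Finset.mem_union_left _ hj, hadj⟩
    have hfiber1 : ∀ i ∈ S', 1 ≤ (D'.filter fun x => x.1 = i).card := by
      intro i hi
      obtain ⟨x, hx, hxi⟩ := Finset.mem_image.mp hi
      exact Finset.card_pos.mpr ⟨x, Finset.mem_filter.mpr ⟨hx, hxi⟩⟩
    have hfiber2 : ∀ i ∈ B, 2 ≤ (D'.filter fun x => x.1 = i).card := by
      intro i hiB
      obtain ⟨hiS', hB⟩ := Finset.mem_filter.mp hiB
      set Di := Finset.univ.filter (fun a : V i => (⟨i, a⟩ : Σ j, V j) ∈ D') with hDidef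
      have hdomDi : isDominatingSet (F i) Di := by
        intro v
        rcases hD' ⟨i, v⟩ with h | ⟨⟨k, w⟩, hkD, hadj⟩
        · exact Or.inl (Finset.mem_filter.mpr ⟨Finset.mem_univ _, h⟩)
        · rcases hadj with ⟨hne, hadj⟩ | ⟨hk, hadj⟩
          · exact absurd hadj (hB k (Finset.mem_image_of_mem _ hkD))
          · dsimp only at hk
            subst hk
            exact Or.inr ⟨w, Finset.mem_filter.mpr ⟨Finset.mem_univ _, hkD⟩, hadj⟩
      have h2 := hdomle i Di hdomDi
      have hc : Di.card = (D'.filter fun x => x.1 = i).card := by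
        apply Finset.card_bij (fun a _ => (⟨i, a⟩ : Σ j, V j))
        · intro a ha
          rw [hDidef, Finset.mem_filter] at ha
          exact Finset.mem_filter.mpr ⟨ha.2, rfl⟩
        · intro a _ b _ hab
          exact eq_of_heq (Sigma.mk.inj_iff.mp hab).2
        · rintro ⟨k, w⟩ hx
          obtain ⟨hxD, hxi⟩ := Finset.mem_filter.mp hx
          dsimp only at hxi
          subst hxi
          exact ⟨w, Finset.mem_filter.mpr ⟨Finset.mem_univ _, hxD⟩, rfl⟩
      omega
    have hcard : S'.card + B.card ≤ D'.card := by
      have h1 : B.card = ∑ i ∈ S', if (∀ j ∈ S', ¬ G.Adj j i) then 1 else 0 := by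
        rw [hBdef, Finset.card_filter]
      have h2 : S'.card + B.card ≤ ∑ i ∈ S', (D'.filter fun x => x.1 = i).card := by
        have h3 : S'.card + B.card
            = ∑ i ∈ S', (1 + if (∀ j ∈ S', ¬ G.Adj j i) then 1 else 0) := by
          rw [Finset.sum_add_distrib, Finset.sum_const, smul_eq_mul, mul_one, ← h1]
        rw [h3]
        apply Finset.sum_le_sum
        intro i hi
        by_cases h : ∀ j ∈ S', ¬ G.Adj j i
        · simp only [if_pos h]
          exact hfiber2 i (Finset.mem_filter.mpr ⟨hi, h⟩)
        · simp only [if_neg h]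
          simpa using hfiber1 i hi
      calc S'.card + B.card ≤ ∑ i ∈ S', (D'.filter fun x => x.1 = i).card := h2
        _ = D'.card := (Finset.card_eq_sum_card_image Sigma.fst D').symm
    have hTcard : (S' ∪ B.image nbr).card ≤ D'.card := by
      have := Finset.card_union_le S' (B.image nbr)
      have := Finset.card_image_le (s := B) (f := nbr)
      omega
    calc S.card = sInf {k | ∃ T : Finset (Fin n), isTotalDominatingSet G T ∧ T.card = k} :=
          hScard
      _ ≤ (S' ∪ B.image nbr).card := Nat.sInf_le ⟨_, hT, rfl⟩
      _ ≤ D'.card := hTcard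
  -- now compute each of the six numbers
  have hdomN : domNum (GLP G F) = S.card := by
    apply le_antisymm
    · exact Nat.sInf_le ⟨D, hDdom, hDcard⟩
    · obtain ⟨D', hD', hc⟩ := Nat.sInf_mem (⟨S.card, D, hDdom, hDcard⟩ :
        Set.Nonempty {k | ∃ E : Finset (Σ i, V i), isDominatingSet (GLP G F) E ∧ E.card = k})
      calc S.card ≤ D'.card := hlow D' hD'
        _ = _ := hc
  have hrestN : restrainedDomNum (GLP G F) = S.card := by
    apply le_antisymm
    · exact Nat.sInf_le ⟨D, ⟨hDdom, hDrest⟩, hDcard⟩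
    · obtain ⟨D', hD', hc⟩ := Nat.sInf_mem (⟨S.card, D, ⟨hDdom, hDrest⟩, hDcard⟩ :
        Set.Nonempty {k | ∃ E : Finset (Σ i, V i),
          isRestrainedDominatingSet (GLP G F) E ∧ E.card = k})
      calc S.card ≤ D'.card := hlow D' hD'.1
        _ = _ := hc
  have htotN : totalDomNum (GLP G F) = S.card := by
    apply le_antisymm
    · exact Nat.sInf_le ⟨D, hDtotal, hDcard⟩
    · obtain ⟨D', hD', hc⟩ := Nat.sInf_mem (⟨S.card, D, hDtotal, hDcard⟩ :
        Set.Nonempty {k | ∃ E : Finset (Σ i, V i),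
          isTotalDominatingSet (GLP G F) E ∧ E.card = k})
      calc S.card ≤ D'.card := hlow D' (fun v => Or.inr (hD' v))
        _ = _ := hc
  have htrN : totalRestrainedDomNum (GLP G F) = S.card := by
    apply le_antisymm
    · exact Nat.sInf_le ⟨D, ⟨hDtotal, hDrest⟩, hDcard⟩
    · obtain ⟨D', hD', hc⟩ := Nat.sInf_mem (⟨S.card, D, ⟨hDtotal, hDrest⟩, hDcard⟩ :
        Set.Nonempty {k | ∃ E : Finset (Σ i, V i),
          isTotalRestrainedDominatingSet (GLP G F) E ∧ E.card = k})
      calc S.card ≤ D'.card := hlow D' (fun v => Or.inr (hD'.1 v))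
        _ = _ := hc
  have hocN : ocDomNum (GLP G F) = S.card := by
    apply le_antisymm
    · exact Nat.sInf_le ⟨D, ⟨hDdom, hDconn⟩, hDcard⟩
    · obtain ⟨D', hD', hc⟩ := Nat.sInf_mem (⟨S.card, D, ⟨hDdom, hDconn⟩, hDcard⟩ :
        Set.Nonempty {k | ∃ E : Finset (Σ i, V i),
          isOuterConnectedDominatingSet (GLP G F) E ∧ E.card = k})
      calc S.card ≤ D'.card := hlow D' hD'.1
        _ = _ := hc
  have htocN : totalOcDomNum (GLP G F) = S.card := by
    apply le_antisymm
    · exact Nat.sInf_le ⟨D, ⟨hDtotal, hDconn⟩, hDcard⟩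
    · obtain ⟨D', hD', hc⟩ := Nat.sInf_mem (⟨S.card, D, ⟨hDtotal, hDconn⟩, hDcard⟩ :
        Set.Nonempty {k | ∃ E : Finset (Σ i, V i),
          isTotalOuterConnectedDominatingSet (GLP G F) E ∧ E.card = k})
      calc S.card ≤ D'.card := hlow D' (fun v => Or.inr (hD'.1 v))
        _ = _ := hc
  refine ⟨?_, ?_, ?_, ?_, ?_⟩ <;> omega
end

section
/- Let G be a connected graph on vertex set {1,...,n} with n ≥ 2 and Φ = (F_1,...,F_n) with γ(F_i) ≥ 2 for all i. If D is a minimum dominating set of G[Φ], |V(F_i)| ≥ 2 and |D ∩ V(F_i)| ≠ 1 for all i ∈ [n], then letting i_1,...,i_s be the indices with D ∩ V(F_{i_r}) ≠ ∅, we have |D ∩ V(F_{i_r})| = 2 for all r, the set {i_1,...,i_s} is an efficient dominating set of G, and 2γ(G) = γ_t(G) = γ(G[Φ]) = γ_t(G[Φ]) = γ_p(G[Φ]). -/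
open scoped Classical

lemma aux_paired_total {W : Type*} (H : SimpleGraph W) (P : Finset W)
    (h : isPairedDominatingSet H P) : isTotalDominatingSet H P := by
  obtain ⟨hdom, M, hM⟩ := h
  intro v
  rcases hdom v with hv | ⟨u, hu, hadj⟩
  · obtain ⟨w, hw, -⟩ := hM.1 (hM.2 (⟨v, hv⟩ : (↑P : Set W)))
    exact ⟨w.1, w.2, (M.adj_sub hw).symm⟩
  · exact ⟨u, hu, hadj⟩

lemma aux_total_dom {W : Type*} (H : SimpleGraph W) (P : Finset W)
    (h : isTotalDominatingSet H P) : isDominatingSet H P := by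
  intro v
  exact Or.inr (h v)
/-- If `γ(F i) ≥ 2` and `|V(F i)| ≥ 2` for all `i`, `D` is a minimum dominating
set of `G[Φ]` and `|D ∩ V(F i)| ≠ 1` for all `i`, then every nonempty
`D ∩ V(F i)` has exactly two elements, the set of indices `i` with
`D ∩ V(F i) ≠ ∅` is an efficient dominating set of `G`, and
`2γ(G) = γ_t(G) = γ(G[Φ]) = γ_t(G[Φ]) = γ_p(G[Φ])`. -/
theorem stmt_13 {n : ℕ} (hn : 2 ≤ n) (G : SimpleGraph (Fin n)) (hG : G.Connected)
    (V : Fin n → Type) [∀ i, Fintype (V i)] (F : ∀ i, SimpleGraph (V i))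
    (hF : ∀ i, 2 ≤ domNum (F i)) (hV : ∀ i, 2 ≤ Fintype.card (V i))
    (D : Finset (Σ i, V i))
    (hD : isDominatingSet (GLP G F) D) (hDmin : D.card = domNum (GLP G F))
    (hD1 : ∀ i, layerCount D i ≠ 1) :
    (∀ i ∈ Finset.univ.filter (fun i => ∃ a : V i, (⟨i, a⟩ : Σ i, V i) ∈ D),
      layerCount D i = 2) ∧
    isEfficientDominatingSet G
      (Finset.univ.filter (fun i => ∃ a : V i, (⟨i, a⟩ : Σ i, V i) ∈ D)) ∧
    (2 * domNum G = totalDomNum G ∧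
     totalDomNum G = domNum (GLP G F) ∧
     domNum (GLP G F) = totalDomNum (GLP G F) ∧
     totalDomNum (GLP G F) = pairedDomNum (GLP G F)) := by
  classical
  set S : Finset (Fin n) :=
    Finset.univ.filter (fun i => ∃ a : V i, (⟨i, a⟩ : Σ i, V i) ∈ D) with hS_def
  have hSmem : ∀ i : Fin n, i ∈ S ↔ ∃ a : V i, (⟨i, a⟩ : Σ i, V i) ∈ D := by
    intro i; simp [hS_def]
  have hVne : ∀ i, Nonempty (V i) := fun i =>
    Fintype.card_pos_iff.mp (by have := hV i; omega)
  let x : ∀ i, V i := fun i => (hVne i).some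
  -- every vertex of G has a neighbor
  have hnbr : ∀ v : Fin n, ∃ w, G.Adj v w := by
    intro v
    obtain ⟨w, hw⟩ := Fintype.exists_ne_of_one_lt_card (by simp only [Fintype.card_fin]; omega) v
    obtain ⟨p⟩ := hG.preconnected v w
    cases p with
    | nil => exact absurd rfl hw.symm
    | cons h q => exact ⟨_, h⟩
  choose j hj using hnbr
  have hjne : ∀ v, v ≠ j v := fun v => (hj v).ne
  -- S is a dominating set of G
  have hSdom : ∀ k : Fin n, ∃ s ∈ S, s = k ∨ G.Adj s k := by
    intro k
    rcases hD ⟨k, x k⟩ with hin | ⟨u, huD, hadj⟩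
    · exact ⟨k, (hSmem k).2 ⟨x k, hin⟩, Or.inl rfl⟩
    · obtain ⟨i, b⟩ := u
      rcases hadj with ⟨hne, hGadj⟩ | ⟨h, _⟩
      · exact ⟨i, (hSmem i).2 ⟨b, huD⟩, Or.inr hGadj⟩
      · dsimp only at h
        subst h
        exact ⟨i, (hSmem i).2 ⟨b, huD⟩, Or.inl rfl⟩
  have hSdomSet : isDominatingSet G S := by
    intro v
    obtain ⟨s, hs, h⟩ := hSdom v
    rcases h with rfl | h
    · exact Or.inl hs
    · exact Or.inr ⟨s, hs, h⟩
  -- layer counts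
  have hlc0 : ∀ i ∉ S, layerCount D i = 0 := by
    intro i hi
    rw [layerCount, Finset.card_eq_zero, Finset.filter_eq_empty_iff]
    rintro ⟨k, a⟩ hk rfl
    exact hi ((hSmem k).2 ⟨a, hk⟩)
  have hlc2 : ∀ i ∈ S, 2 ≤ layerCount D i := by
    intro i hi
    have h0 : layerCount D i ≠ 0 := by
      obtain ⟨a, ha⟩ := (hSmem i).1 hi
      rw [layerCount, Finset.card_ne_zero]
      exact ⟨⟨i, a⟩, Finset.mem_filter.2 ⟨ha, rfl⟩⟩
    have := hD1 i
    omega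
  have hcardD : D.card = ∑ i ∈ S, layerCount D i := by
    rw [Finset.card_eq_sum_card_fiberwise (f := Sigma.fst) (t := Finset.univ)
      (fun x _ => Finset.mem_univ _)]
    rw [← Finset.sum_subset (Finset.subset_univ S)]
    · rfl
    · intro i _ hi
      exact hlc0 i hi
  have hDge : 2 * S.card ≤ D.card := by
    have h := Finset.card_nsmul_le_sum S (layerCount D) 2 hlc2
    rw [hcardD]
    simpa [mul_comm, smul_eq_mul] using h
  -- γ(G) ≤ |S|
  have h1 : domNum G ≤ S.card := Nat.sInf_le ⟨S, hSdomSet, rfl⟩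
  -- a minimum dominating set A of G
  have hA : domNum G ∈ {k | ∃ A : Finset (Fin n), isDominatingSet G A ∧ A.card = k} := by
    apply Nat.sInf_mem
    exact ⟨Finset.univ.card, Finset.univ, fun v => Or.inl (Finset.mem_univ v), rfl⟩
  obtain ⟨A, hAdom, hAcard⟩ := hA
  -- γ_t(G) ≤ 2γ(G)
  have hATtot : isTotalDominatingSet G (A ∪ A.image j) := by
    intro v
    rcases hAdom v with hv | ⟨u, hu, hadj⟩
    · exact ⟨j v, Finset.mem_union_right _ (Finset.mem_image_of_mem j hv), (hj v).symm⟩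
    · exact ⟨u, Finset.mem_union_left _ hu, hadj⟩
  have h2 : totalDomNum G ≤ 2 * domNum G := by
    have hmem : (A ∪ A.image j).card ∈
        {k | ∃ P : Finset (Fin n), isTotalDominatingSet G P ∧ P.card = k} :=
      ⟨A ∪ A.image j, hATtot, rfl⟩
    have := Nat.sInf_le hmem
    have hc : (A ∪ A.image j).card ≤ 2 * A.card := by
      have := Finset.card_union_le A (A.image j)
      have := Finset.card_image_le (s := A) (f := j)
      omega
    calc totalDomNum G ≤ (A ∪ A.image j).card := this
      _ ≤ 2 * A.card := hc
      _ = 2 * domNum G := by rw [hAcard]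
  -- a minimum total dominating set of G, lifted to GLP
  have hTG : totalDomNum G ∈
      {k | ∃ P : Finset (Fin n), isTotalDominatingSet G P ∧ P.card = k} := by
    apply Nat.sInf_mem
    refine ⟨Finset.univ.card, Finset.univ, fun v => ⟨j v, Finset.mem_univ _, (hj v).symm⟩, rfl⟩
  obtain ⟨TG, hTGtot, hTGcard⟩ := hTG
  have h3 : domNum (GLP G F) ≤ totalDomNum G := by
    have hdom : isDominatingSet (GLP G F) (TG.image (fun t => ⟨t, x t⟩)) := by
      rintro ⟨k, v⟩
      obtain ⟨t, ht, hadj⟩ := hTGtot k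
      refine Or.inr ⟨⟨t, x t⟩, Finset.mem_image_of_mem _ ht, Or.inl ⟨hadj.ne, hadj⟩⟩
    have hinj : Function.Injective (fun t : Fin n => (⟨t, x t⟩ : Σ i, V i)) := by
      intro a b hab
      exact congrArg Sigma.fst hab
    have hmem : (TG.image (fun t => (⟨t, x t⟩ : Σ i, V i))).card ∈
        {k | ∃ P : Finset (Σ i, V i), isDominatingSet (GLP G F) P ∧ P.card = k} :=
      ⟨TG.image (fun t => ⟨t, x t⟩), hdom, rfl⟩
    have := Nat.sInf_le hmem
    rwa [Finset.card_image_of_injective _ hinj, hTGcard] at this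
  -- the chain of equalities
  have key1 : D.card = 2 * S.card := by omega
  have key2 : domNum G = S.card := by omega
  have key3 : totalDomNum G = 2 * S.card := by omega
  -- every nonempty layer has exactly two vertices
  have hlc_eq2 : ∀ i ∈ S, layerCount D i = 2 := by
    by_contra hcon
    push_neg at hcon
    obtain ⟨i, hiS, hi2⟩ := hcon
    have hlt : ∑ k ∈ S, 2 < ∑ k ∈ S, layerCount D k :=
      Finset.sum_lt_sum hlc2 ⟨i, hiS, by have := hlc2 i hiS; omega⟩
    rw [Finset.sum_const, smul_eq_mul] at hlt
    omega
  -- S is nonempty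
  have hSne : S.Nonempty := by
    obtain ⟨s, hs, -⟩ := hSdom ⟨0, by omega⟩
    exact ⟨s, hs⟩
  -- efficiency of S
  have huniqdom : ∀ v : Fin n, ∀ s ∈ S, ∀ s' ∈ S,
      (s = v ∨ G.Adj s v) → (s' = v ∨ G.Adj s' v) → s = s' := by
    intro v s hsS s' hs'S hd hd'
    by_contra hne
    -- build a small total dominating set of G
    set T' : Finset (Fin n) := (S ∪ {v}) ∪ (S \ {s, s'}).image j with hT'
    have hT'tot : isTotalDominatingSet G T' := by
      intro u
      obtain ⟨t, htS, ht⟩ := hSdom u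
      rcases ht with rfl | hadj
      · -- u = t ∈ S; find a partner for u
        by_cases hts : t = s
        · subst hts
          rcases hd with rfl | hd
          · -- v = t; then s' dominates v = t
            rcases hd' with rfl | hd'
            · exact absurd rfl hne
            · exact ⟨s', Finset.mem_union_left _ (Finset.mem_union_left _ hs'S), hd'⟩
          · exact ⟨v, Finset.mem_union_left _
              (Finset.mem_union_right _ (Finset.mem_singleton_self v)), hd.symm⟩
        · by_cases hts' : t = s'
          · subst hts'
            rcases hd' with rfl | hd'
            · rcases hd with rfl | hd
              · exact absurd rfl hne
              · exact ⟨s, Finset.mem_union_left _ (Finset.mem_union_left _ hsS), hd⟩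
            · exact ⟨v, Finset.mem_union_left _
                (Finset.mem_union_right _ (Finset.mem_singleton_self v)), hd'.symm⟩
          · refine ⟨j t, Finset.mem_union_right _ ?_, (hj t).symm⟩
            exact Finset.mem_image_of_mem j
              (Finset.mem_sdiff.2 ⟨htS, by simp [hts, hts']⟩)
      · exact ⟨t, Finset.mem_union_left _ (Finset.mem_union_left _ htS), hadj⟩
    have hT'card : T'.card ≤ 2 * S.card - 1 := by
      have hss : ({s, s'} : Finset (Fin n)) ⊆ S := by
        intro z hz
        rcases Finset.mem_insert.1 hz with rfl | hz
        · exact hsS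
        · rw [Finset.mem_singleton.1 hz]; exact hs'S
      have hcard2 : ({s, s'} : Finset (Fin n)).card = 2 := by
        rw [Finset.card_insert_of_notMem (by simpa using hne), Finset.card_singleton]
      have hsd : (S \ {s, s'}).card = S.card - 2 := by
        rw [Finset.card_sdiff_of_subset hss, hcard2]
      have h2S : 2 ≤ S.card := by
        have := Finset.card_le_card hss
        omega
      have e1 := Finset.card_union_le (S ∪ {v}) ((S \ {s, s'}).image j)
      have e2 := Finset.card_union_le S ({v} : Finset (Fin n))
      have e3 := Finset.card_image_le (s := S \ {s, s'}) (f := j)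
      simp only [Finset.card_singleton] at e2
      rw [← hT'] at e1
      omega
    have hle : totalDomNum G ≤ T'.card := by
      have hmem : T'.card ∈
          {k | ∃ P : Finset (Fin n), isTotalDominatingSet G P ∧ P.card = k} :=
        ⟨T', hT'tot, rfl⟩
      exact Nat.sInf_le hmem
    have hS1 : 1 ≤ S.card := Finset.card_pos.2 hSne
    omega
  have heff : isEfficientDominatingSet G S := by
    intro v
    obtain ⟨s, hsS, hd⟩ := hSdom v
    refine ⟨s, ⟨hsS, hd⟩, ?_⟩
    rintro s' ⟨hs'S, hd'⟩
    exact huniqdom v s' hs'S s hsS hd' hd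
  -- distinctness consequences of efficiency
  have hjinjS : ∀ s ∈ S, ∀ s' ∈ S, j s = j s' → s = s' := by
    intro s hs s' hs' hjj
    exact huniqdom (j s) s hs s' hs' (Or.inr (hj s)) (Or.inr (hjj ▸ hj s'))
  have hjS : ∀ s ∈ S, ∀ s' ∈ S, s ≠ j s' := by
    intro s hs s' hs' heq
    have : s = s' := huniqdom s s hs s' hs' (Or.inl rfl) (Or.inr (heq ▸ hj s'))
    exact hjne s (this ▸ heq)
  -- the paired total dominating set of GLP
  set f1 : Fin n → Σ i, V i := fun s => ⟨s, x s⟩ with hf1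
  set f2 : Fin n → Σ i, V i := fun s => ⟨j s, x (j s)⟩ with hf2
  set T : Finset (Σ i, V i) := S.image f1 ∪ S.image f2 with hTdef
  have hf1inj : Function.Injective f1 := fun a b hab => congrArg Sigma.fst hab
  have hf2injS : Set.InjOn f2 ↑S := by
    intro a ha b hb hab
    exact hjinjS a ha b hb (congrArg Sigma.fst hab)
  have hf1f2 : ∀ s ∈ S, ∀ s' ∈ S, f1 s ≠ f2 s' := by
    intro s hs s' hs' heq
    exact hjS s hs s' hs' (congrArg Sigma.fst heq)
  have hTcard : T.card = 2 * S.card := by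
    have hdisj : Disjoint (S.image f1) (S.image f2) := by
      rw [Finset.disjoint_left]
      rintro a ha1 ha2
      obtain ⟨u, hu, rfl⟩ := Finset.mem_image.1 ha1
      obtain ⟨w, hw, hwe⟩ := Finset.mem_image.1 ha2
      exact hf1f2 u hu w hw hwe.symm
    rw [hTdef, Finset.card_union_of_disjoint hdisj,
      Finset.card_image_of_injective _ hf1inj, Finset.card_image_of_injOn hf2injS]
    omega
  have hadj12 : ∀ s : Fin n, (GLP G F).Adj (f1 s) (f2 s) := by
    intro s
    exact Or.inl ⟨(hj s).ne, hj s⟩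
  have hTtot : isTotalDominatingSet (GLP G F) T := by
    rintro ⟨k, v⟩
    obtain ⟨s, hsS, hd⟩ := hSdom k
    rcases hd with rfl | hadj
    · refine ⟨f2 s, Finset.mem_union_right _ (Finset.mem_image_of_mem f2 hsS), ?_⟩
      exact Or.inl ⟨(hjne s ∘ Eq.symm), (hj s).symm⟩
    · exact ⟨f1 s, Finset.mem_union_left _ (Finset.mem_image_of_mem f1 hsS),
        Or.inl ⟨hadj.ne, hadj⟩⟩
  -- membership characterization for T
  have hTmem : ∀ u : Σ i, V i, u ∈ T → ∃ s ∈ S, u = f1 s ∨ u = f2 s := by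
    intro u hu
    rcases Finset.mem_union.1 hu with h | h
    · obtain ⟨s, hs, rfl⟩ := Finset.mem_image.1 h
      exact ⟨s, hs, Or.inl rfl⟩
    · obtain ⟨s, hs, rfl⟩ := Finset.mem_image.1 h
      exact ⟨s, hs, Or.inr rfl⟩
  -- the pairing relation
  set R : (Σ i, V i) → (Σ i, V i) → Prop :=
    fun u w => ∃ s ∈ S, (u = f1 s ∧ w = f2 s) ∨ (u = f2 s ∧ w = f1 s) with hR
  have hRuniq : ∀ u w w', R u w → R u w' → w = w' := by
    rintro u w w' ⟨s, hs, hc⟩ ⟨s', hs', hc'⟩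
    rcases hc with ⟨rfl, rfl⟩ | ⟨rfl, rfl⟩ <;> rcases hc' with ⟨he, rfl⟩ | ⟨he, rfl⟩
    · rw [hf1inj he]
    · exact absurd he (hf1f2 s hs s' hs')
    · exact absurd he.symm (hf1f2 s' hs' s hs)
    · rw [hf2injS (Finset.mem_coe.2 hs) (Finset.mem_coe.2 hs') he]
  have hRadj : ∀ u w, R u w → (GLP G F).Adj u w := by
    rintro u w ⟨s, hs, ⟨rfl, rfl⟩ | ⟨rfl, rfl⟩⟩
    · exact hadj12 s
    · exact (hadj12 s).symm
  -- T is a paired dominating set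
  have hTpaired : isPairedDominatingSet (GLP G F) T := by
    refine ⟨aux_total_dom _ _ hTtot, ?_⟩
    refine ⟨⟨Set.univ, fun a b => R a.1 b.1, ?_, fun _ => Set.mem_univ _, ?_⟩, ?_, ?_⟩
    · intro a b hab
      exact hRadj a.1 b.1 hab
    · constructor
      intro a b hab
      obtain ⟨s, hs, hc⟩ := hab
      refine ⟨s, hs, ?_⟩
      tauto
    · -- matching
      rintro ⟨u, hu⟩ -
      obtain ⟨s, hs, hc⟩ := hTmem u hu
      rcases hc with rfl | rfl
      · refine ⟨⟨f2 s, Finset.mem_union_right _ (Finset.mem_image_of_mem f2 hs)⟩,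
          ⟨s, hs, Or.inl ⟨rfl, rfl⟩⟩, ?_⟩
        rintro ⟨w, hw⟩ hRw
        exact Subtype.ext (hRuniq (f1 s) w (f2 s) hRw ⟨s, hs, Or.inl ⟨rfl, rfl⟩⟩)
      · refine ⟨⟨f1 s, Finset.mem_union_left _ (Finset.mem_image_of_mem f1 hs)⟩,
          ⟨s, hs, Or.inr ⟨rfl, rfl⟩⟩, ?_⟩
        rintro ⟨w, hw⟩ hRw
        exact Subtype.ext (hRuniq (f2 s) w (f1 s) hRw ⟨s, hs, Or.inr ⟨rfl, rfl⟩⟩)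
    · intro v
      exact Set.mem_univ v
  -- paired domination number bounds
  have h5 : pairedDomNum (GLP G F) ≤ 2 * S.card := by
    have hmem : T.card ∈
        {k | ∃ P : Finset (Σ i, V i), isPairedDominatingSet (GLP G F) P ∧ P.card = k} :=
      ⟨T, hTpaired, rfl⟩
    have h : pairedDomNum (GLP G F) ≤ T.card := Nat.sInf_le hmem
    omega
  have h6 : totalDomNum (GLP G F) ≤ pairedDomNum (GLP G F) := by
    have hne : {k | ∃ P : Finset (Σ i, V i),
        isPairedDominatingSet (GLP G F) P ∧ P.card = k}.Nonempty := ⟨T.card, T, hTpaired, rfl⟩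
    obtain ⟨P, hP, hPcard⟩ := Nat.sInf_mem hne
    have hmem : P.card ∈
        {k | ∃ Q : Finset (Σ i, V i), isTotalDominatingSet (GLP G F) Q ∧ Q.card = k} :=
      ⟨P, aux_paired_total _ _ hP, rfl⟩
    have h : totalDomNum (GLP G F) ≤ P.card := Nat.sInf_le hmem
    rw [hPcard] at h
    exact h
  have h7 : domNum (GLP G F) ≤ totalDomNum (GLP G F) := by
    have hne : {k | ∃ P : Finset (Σ i, V i),
        isTotalDominatingSet (GLP G F) P ∧ P.card = k}.Nonempty := ⟨T.card, T, hTtot, rfl⟩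
    obtain ⟨P, hP, hPcard⟩ := Nat.sInf_mem hne
    have hmem : P.card ∈
        {k | ∃ Q : Finset (Σ i, V i), isDominatingSet (GLP G F) Q ∧ Q.card = k} :=
      ⟨P, aux_total_dom _ _ hP, rfl⟩
    have h : domNum (GLP G F) ≤ P.card := Nat.sInf_le hmem
    rw [hPcard] at h
    exact h
  -- final assembly
  refine ⟨hlc_eq2, heff, by omega, by omega, by omega, by omega⟩
end

section
/- Let G be a connected graph on vertex set {1,...,n} with n ≥ 2 and Φ = (F_1,...,F_n). If i(F_1) = i(F_2) = ... = i(F_n), then i(G[Φ]) = i(G)·i(F_1). If β_0(F_1) = ... = β_0(F_n), then β_0(G[Φ]) = β_0(G)·β_0(F_1). -/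
open scoped Classical

section AuxGeneral

variable {W : Type*} [Fintype W] {H : SimpleGraph W}

lemma maxIndep_iff {D : Finset W} :
    isMaximalIndependentSet H D ↔
      isIndependentSet H D ∧ ∀ v ∉ D, ∃ u ∈ D, H.Adj u v := by
  constructor
  · rintro ⟨hind, hmax⟩
    refine ⟨hind, fun v hv => ?_⟩
    have h := hmax (insert v D) (Finset.ssubset_insert hv)
    rw [isIndependentSet] at h
    push_neg at h
    obtain ⟨a, ha, b, hb, hab⟩ := h
    rcases Finset.mem_insert.mp ha with ha' | ha'
    · rcases Finset.mem_insert.mp hb with hb' | hb'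
      · subst ha'; subst hb'; exact absurd hab (H.loopless.irrefl _)
      · subst ha'; exact ⟨b, hb', hab.symm⟩
    · rcases Finset.mem_insert.mp hb with hb' | hb'
      · subst hb'; exact ⟨a, ha', hab⟩
      · exact absurd hab (hind a ha' b hb')
  · rintro ⟨hind, hdom⟩
    refine ⟨hind, fun D' hsub hind' => ?_⟩
    obtain ⟨v, hv', hv⟩ := Finset.exists_of_ssubset hsub
    obtain ⟨u, hu, hadj⟩ := hdom v hv
    exact hind' u (hsub.subset hu) v hv' hadj

lemma exists_maxIndep (H : SimpleGraph W) : ∃ D, isMaximalIndependentSet H D := by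
  obtain ⟨D, hD, hmax⟩ := Finset.exists_max_image
    (Finset.univ.filter fun D : Finset W => isIndependentSet H D) Finset.card
    ⟨∅, Finset.mem_filter.mpr ⟨Finset.mem_univ _, by simp [isIndependentSet]⟩⟩
  rw [Finset.mem_filter] at hD
  refine ⟨D, hD.2, fun D' hsub hind' => ?_⟩
  have := hmax D' (Finset.mem_filter.mpr ⟨Finset.mem_univ _, hind'⟩)
  exact absurd this (not_le.mpr (Finset.card_lt_card hsub))

lemma indepDomNum_set_nonempty (H : SimpleGraph W) :
    {k | ∃ D : Finset W, isMaximalIndependentSet H D ∧ D.card = k}.Nonempty := by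
  obtain ⟨D, hD⟩ := exists_maxIndep H
  exact ⟨D.card, D, hD, rfl⟩

lemma indepDomNum_le_card {D : Finset W} (hD : isMaximalIndependentSet H D) :
    indepDomNum H ≤ D.card :=
  Nat.sInf_le ⟨D, hD, rfl⟩

lemma exists_maxIndep_card (H : SimpleGraph W) :
    ∃ D : Finset W, isMaximalIndependentSet H D ∧ D.card = indepDomNum H :=
  Nat.sInf_mem (indepDomNum_set_nonempty H)

lemma indepDomNum_eq_zero_of_isEmpty (H : SimpleGraph W) [IsEmpty W] :
    indepDomNum H = 0 := by
  have : isMaximalIndependentSet H ∅ :=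
    maxIndep_iff.mpr ⟨by simp [isIndependentSet], fun v _ => (IsEmpty.false v).elim⟩
  exact Nat.le_zero.mp (by simpa using indepDomNum_le_card this)

lemma one_le_indepDomNum (H : SimpleGraph W) [Nonempty W] :
    1 ≤ indepDomNum H := by
  obtain ⟨D, hD, hcard⟩ := exists_maxIndep_card H
  rw [← hcard]
  rcases Finset.eq_empty_or_nonempty D with rfl | hne
  · exfalso
    obtain ⟨v⟩ := ‹Nonempty W›
    obtain ⟨u, hu, -⟩ := (maxIndep_iff.mp hD).2 v (Finset.notMem_empty v)
    exact Finset.notMem_empty u hu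
  · exact Finset.card_pos.mpr hne

lemma indepNum_bddAbove (H : SimpleGraph W) :
    BddAbove {k | ∃ D : Finset W, isIndependentSet H D ∧ D.card = k} := by
  refine ⟨Fintype.card W, ?_⟩
  rintro k ⟨D, _, rfl⟩
  exact Finset.card_le_univ D

lemma card_le_indepNum {D : Finset W} (hD : isIndependentSet H D) :
    D.card ≤ indepNum H :=
  le_csSup (indepNum_bddAbove H) ⟨D, hD, rfl⟩

lemma exists_indep_card (H : SimpleGraph W) :
    ∃ D : Finset W, isIndependentSet H D ∧ D.card = indepNum H := by
  have hne : {k | ∃ D : Finset W, isIndependentSet H D ∧ D.card = k}.Nonempty :=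
    ⟨0, ∅, by simp [isIndependentSet], Finset.card_empty⟩
  exact Nat.sSup_mem hne (indepNum_bddAbove H)

end AuxGeneral

section AuxGLP

variable {n : ℕ} {V : Fin n → Type} [∀ i, Fintype (V i)]
  {G : SimpleGraph (Fin n)} {F : ∀ i, SimpleGraph (V i)}

/-- The layer of `D` above `i`. -/
noncomputable def glpSec (D : Finset (Σ i, V i)) (i : Fin n) : Finset (V i) :=
  D.preimage (Sigma.mk i) (sigma_mk_injective.injOn)

lemma mem_glpSec {D : Finset (Σ i, V i)} {i : Fin n} {a : V i} :
    a ∈ glpSec D i ↔ (⟨i, a⟩ : Σ j, V j) ∈ D :=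
  Finset.mem_preimage

lemma glpSec_card_sum (D : Finset (Σ i, V i)) :
    D.card = ∑ i, (glpSec D i).card := by
  rw [Finset.card_eq_sum_card_fiberwise (f := Sigma.fst) (t := Finset.univ)
    (fun x _ => Finset.mem_univ _)]
  refine Finset.sum_congr rfl fun i _ => ?_
  have : D.filter (fun x => x.1 = i) = (glpSec D i).map ⟨Sigma.mk i, sigma_mk_injective⟩ := by
    ext ⟨j, a⟩
    simp only [Finset.mem_filter, Finset.mem_map, Function.Embedding.coeFn_mk, mem_glpSec]
    constructor
    · rintro ⟨hmem, rfl⟩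
      exact ⟨a, hmem, rfl⟩
    · rintro ⟨b, hb, heq⟩
      cases heq
      exact ⟨hb, rfl⟩
  rw [this, Finset.card_map]

lemma glp_indep_sec {D : Finset (Σ i, V i)} (hD : isIndependentSet (GLP G F) D) (i : Fin n) :
    isIndependentSet (F i) (glpSec D i) := fun a ha b hb hab =>
  hD ⟨i, a⟩ (mem_glpSec.mp ha) ⟨i, b⟩ (mem_glpSec.mp hb) (Or.inr ⟨rfl, hab⟩)

lemma glp_support_indep {D : Finset (Σ i, V i)} (hD : isIndependentSet (GLP G F) D) :
    isIndependentSet G (Finset.univ.filter fun i => (glpSec D i).Nonempty) := by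
  intro i hi j hj hij
  obtain ⟨a, ha⟩ := (Finset.mem_filter.mp hi).2
  obtain ⟨b, hb⟩ := (Finset.mem_filter.mp hj).2
  exact hD ⟨i, a⟩ (mem_glpSec.mp ha) ⟨j, b⟩ (mem_glpSec.mp hb) (Or.inl ⟨G.ne_of_adj hij, hij⟩)

lemma glp_sigma_indep {S : Finset (Fin n)} {A : ∀ i, Finset (V i)}
    (hS : isIndependentSet G S) (hA : ∀ i, isIndependentSet (F i) (A i)) :
    isIndependentSet (GLP G F) (S.sigma A) := by
  rintro ⟨i, a⟩ hx ⟨j, b⟩ hy hxy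
  rw [Finset.mem_sigma] at hx hy
  rcases hxy with ⟨hne, hadj⟩ | ⟨h, hadj⟩
  · exact hS i hx.1 j hy.1 hadj
  · dsimp only at h
    subst h
    exact hA i a hx.2 b hy.2 hadj

end AuxGLP

/-- If all `F i` have the same independent domination number, then
`i(G[Φ]) = i(G)·i(F i)`; if all `F i` have the same independence number, then
`β₀(G[Φ]) = β₀(G)·β₀(F i)`. -/
theorem stmt_14 {n : ℕ} (hn : 2 ≤ n) (G : SimpleGraph (Fin n)) (hG : G.Connected)
    (V : Fin n → Type) [∀ i, Fintype (V i)] (F : ∀ i, SimpleGraph (V i)) :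
    ((∀ i j, indepDomNum (F i) = indepDomNum (F j)) →
      ∀ i, indepDomNum (GLP G F) = indepDomNum G * indepDomNum (F i)) ∧
    ((∀ i j, indepNum (F i) = indepNum (F j)) →
      ∀ i, indepNum (GLP G F) = indepNum G * indepNum (F i)) := by
  constructor
  · intro heq i0
    by_cases hm0 : indepDomNum (F i0) = 0
    · have hemp : ∀ j, IsEmpty (V j) := by
        intro j
        by_contra h
        rw [not_isEmpty_iff] at h
        have h1 := one_le_indepDomNum (F j)
        rw [heq j i0, hm0] at h1
        exact absurd h1 (by norm_num)
      haveI : IsEmpty (Σ j, V j) := ⟨fun x => (hemp x.1).false x.2⟩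
      rw [hm0, mul_zero]
      exact indepDomNum_eq_zero_of_isEmpty _
    · have hne : ∀ j, Nonempty (V j) := by
        intro j
        by_contra h
        rw [not_nonempty_iff] at h
        have h0 := indepDomNum_eq_zero_of_isEmpty (F j)
        rw [heq j i0] at h0
        exact hm0 h0
      apply le_antisymm
      · obtain ⟨S, hS, hScard⟩ := exists_maxIndep_card G
        choose A hA hAcard using fun j => exists_maxIndep_card (F j)
        have hDind : isIndependentSet (GLP G F) (S.sigma A) :=
          glp_sigma_indep hS.1 (fun j => (hA j).1)
        have hDmax : isMaximalIndependentSet (GLP G F) (S.sigma A) := by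
          refine maxIndep_iff.mpr ⟨hDind, ?_⟩
          rintro ⟨j, c⟩ hv
          rw [Finset.mem_sigma] at hv
          by_cases hjS : j ∈ S
          · have hc : c ∉ A j := fun hc => hv ⟨hjS, hc⟩
            obtain ⟨u, hu, hadj⟩ := (maxIndep_iff.mp (hA j)).2 c hc
            exact ⟨⟨j, u⟩, Finset.mem_sigma.mpr ⟨hjS, hu⟩, Or.inr ⟨rfl, hadj⟩⟩
          · obtain ⟨k, hk, hadj⟩ := (maxIndep_iff.mp hS).2 j hjS
            have hAk : (A k).Nonempty := by
              rw [← Finset.card_pos, hAcard k, ← heq i0 k]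
              exact Nat.pos_of_ne_zero hm0
            obtain ⟨u, hu⟩ := hAk
            exact ⟨⟨k, u⟩, Finset.mem_sigma.mpr ⟨hk, hu⟩,
              Or.inl ⟨G.ne_of_adj hadj, hadj⟩⟩
        calc indepDomNum (GLP G F) ≤ (S.sigma A).card := indepDomNum_le_card hDmax
          _ = ∑ j ∈ S, (A j).card := Finset.card_sigma _ _
          _ = ∑ j ∈ S, indepDomNum (F i0) := by
              refine Finset.sum_congr rfl fun j _ => ?_
              rw [hAcard j, heq j i0]
          _ = S.card * indepDomNum (F i0) := by rw [Finset.sum_const, smul_eq_mul]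
          _ = indepDomNum G * indepDomNum (F i0) := by rw [hScard]
      · refine le_csInf (indepDomNum_set_nonempty _) ?_
        rintro k ⟨D, hD, rfl⟩
        set S := Finset.univ.filter fun j => (glpSec D j).Nonempty with hSdef
        have hSind : isIndependentSet G S := glp_support_indep hD.1
        have hdomD := (maxIndep_iff.mp hD).2
        have hSmax : isMaximalIndependentSet G S := by
          refine maxIndep_iff.mpr ⟨hSind, fun j hj => ?_⟩
          obtain ⟨c⟩ := hne j
          have hc : (⟨j, c⟩ : Σ l, V l) ∉ D := fun hmem =>
            hj (Finset.mem_filter.mpr ⟨Finset.mem_univ _, ⟨c, mem_glpSec.mpr hmem⟩⟩)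
          obtain ⟨⟨k, a⟩, hu, hadj⟩ := hdomD _ hc
          rcases hadj with ⟨hne', hadj⟩ | ⟨h, hadj⟩
          · exact ⟨k, Finset.mem_filter.mpr ⟨Finset.mem_univ _, ⟨a, mem_glpSec.mpr hu⟩⟩, hadj⟩
          · dsimp only at h
            subst h
            exact absurd
              (Finset.mem_filter.mpr ⟨Finset.mem_univ _, ⟨a, mem_glpSec.mpr hu⟩⟩) hj
        have hsec : ∀ j ∈ S, indepDomNum (F i0) ≤ (glpSec D j).card := by
          intro j hj
          have hmaxsec : isMaximalIndependentSet (F j) (glpSec D j) := by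
            refine maxIndep_iff.mpr ⟨glp_indep_sec hD.1 j, fun c hc => ?_⟩
            have hc' : (⟨j, c⟩ : Σ l, V l) ∉ D := fun hmem => hc (mem_glpSec.mpr hmem)
            obtain ⟨⟨k, a⟩, hu, hadj⟩ := hdomD _ hc'
            rcases hadj with ⟨hne', hadj⟩ | ⟨h, hadj⟩
            · exact absurd hadj (hSind k
                (Finset.mem_filter.mpr ⟨Finset.mem_univ _, ⟨a, mem_glpSec.mpr hu⟩⟩) j hj)
            · dsimp only at h
              subst h
              exact ⟨a, mem_glpSec.mpr hu, hadj⟩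
          rw [heq i0 j]
          exact indepDomNum_le_card hmaxsec
        calc indepDomNum G * indepDomNum (F i0) ≤ S.card * indepDomNum (F i0) :=
              Nat.mul_le_mul_right _ (indepDomNum_le_card hSmax)
          _ = ∑ j ∈ S, indepDomNum (F i0) := by rw [Finset.sum_const, smul_eq_mul]
          _ ≤ ∑ j ∈ S, (glpSec D j).card := Finset.sum_le_sum hsec
          _ ≤ ∑ j, (glpSec D j).card :=
              Finset.sum_le_sum_of_subset (Finset.subset_univ S)
          _ = D.card := (glpSec_card_sum D).symm
  · intro heq i0
    apply le_antisymm
    · refine csSup_le ⟨0, ∅, by simp [isIndependentSet], Finset.card_empty⟩ ?_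
      rintro k ⟨D, hD, rfl⟩
      set S := Finset.univ.filter fun j => (glpSec D j).Nonempty with hSdef
      have hSind : isIndependentSet G S := glp_support_indep hD
      calc D.card = ∑ j, (glpSec D j).card := glpSec_card_sum D
        _ = ∑ j ∈ S, (glpSec D j).card := by
            refine (Finset.sum_subset (Finset.subset_univ S) ?_).symm
            intro j _ hj
            rw [hSdef, Finset.mem_filter] at hj
            push_neg at hj
            rw [Finset.card_eq_zero, ← Finset.not_nonempty_iff_eq_empty]
            exact Finset.not_nonempty_iff_eq_empty.mpr (hj (Finset.mem_univ j))
        _ ≤ ∑ j ∈ S, indepNum (F i0) := Finset.sum_le_sum fun j _ => by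
            rw [← heq j i0]; exact card_le_indepNum (glp_indep_sec hD j)
        _ = S.card * indepNum (F i0) := by rw [Finset.sum_const, smul_eq_mul]
        _ ≤ indepNum G * indepNum (F i0) :=
            Nat.mul_le_mul_right _ (card_le_indepNum hSind)
    · obtain ⟨S, hS, hScard⟩ := exists_indep_card G
      choose B hB hBcard using fun j => exists_indep_card (F j)
      calc indepNum G * indepNum (F i0) = S.card * indepNum (F i0) := by rw [hScard]
        _ = ∑ j ∈ S, indepNum (F i0) := by rw [Finset.sum_const, smul_eq_mul]
        _ = ∑ j ∈ S, (B j).card := Finset.sum_congr rfl fun j _ => by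
            rw [hBcard j, heq j i0]
        _ = (S.sigma B).card := (Finset.card_sigma _ _).symm
        _ ≤ indepNum (GLP G F) := card_le_indepNum (glp_sigma_indep hS (fun j => hB j))
end

section
/- Let G and F be graphs with |V(G)| ≥ 2, |V(F)| ≥ 2 and G connected. Then the lexicographic product G[F] is well γ_t-dominated if and only if either (i) G is complete and F is well γ_t-dominated with γ_t(F) = 2, or (ii) G is well γ_t-dominated and F has an isolated vertex. -/
open scoped Classical

/-- The standard lexicographic product `G[F]`. -/
def lexProd {α β : Type*} (G : SimpleGraph α) (F : SimpleGraph β) :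
    SimpleGraph (α × β) where
  Adj x y := G.Adj x.1 y.1 ∨ (x.1 = y.1 ∧ F.Adj x.2 y.2)
  symm := by
    constructor
    rintro ⟨g, f⟩ ⟨g', f'⟩ (h | ⟨h1, h2⟩)
    · exact Or.inl h.symm
    · exact Or.inr ⟨h1.symm, h2.symm⟩
  loopless := by
    constructor
    rintro ⟨g, f⟩ (h | ⟨_, h⟩)
    · exact G.irrefl h
    · exact F.irrefl h

section WTDHelpers

open Finset

variable {V : Type*}

lemma tdsMono {H : SimpleGraph V} {S T : Finset V}
    (h : isTotalDominatingSet H S) (hST : S ⊆ T) : isTotalDominatingSet H T := by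
  intro v
  obtain ⟨u, hu, hadj⟩ := h v
  exact ⟨u, hST hu, hadj⟩

lemma notTDSElim {H : SimpleGraph V} {S : Finset V} (h : ¬ isTotalDominatingSet H S) :
    ∃ v, ∀ u ∈ S, ¬ H.Adj u v := by
  unfold isTotalDominatingSet at h
  push_neg at h
  exact h

lemma existsMinimalTDS {H : SimpleGraph V} :
    ∀ (S : Finset V), isTotalDominatingSet H S →
      ∃ T ⊆ S, isMinimalTotalDominatingSet H T := by
  intro S
  induction S using Finset.strongInductionOn with
  | _ S ih =>
    intro hS
    by_cases h : ∀ T : Finset V, T ⊂ S → ¬ isTotalDominatingSet H T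
    · exact ⟨S, subset_rfl, hS, h⟩
    · push_neg at h
      obtain ⟨T, hT, hTd⟩ := h
      obtain ⟨T', h1, h2⟩ := ih T hT hTd
      exact ⟨T', h1.trans hT.subset, h2⟩

lemma minimalOfWitness {H : SimpleGraph V} {S : Finset V}
    (h : isTotalDominatingSet H S)
    (he : ∀ x ∈ S, ∃ v, ∀ u ∈ S, u ≠ x → ¬ H.Adj u v) :
    isMinimalTotalDominatingSet H S := by
  refine ⟨h, fun D' hD' hd => ?_⟩
  obtain ⟨x, hxS, hxD⟩ := Finset.exists_of_ssubset hD'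
  obtain ⟨v, hv⟩ := he x hxS
  obtain ⟨u, hu, hadj⟩ := hd v
  exact hv u (hD'.subset hu) (fun e => hxD (e ▸ hu)) hadj

lemma twoLeCardTDS {H : SimpleGraph V} [Nonempty V] {S : Finset V}
    (h : isTotalDominatingSet H S) : 2 ≤ S.card := by
  obtain ⟨u, hu, _⟩ := h (Classical.arbitrary V)
  obtain ⟨w, hw, hadj⟩ := h u
  have hne : w ≠ u := fun e => H.loopless.irrefl u (e ▸ hadj)
  exact Finset.one_lt_card.mpr ⟨u, hu, w, hw, hne.symm⟩

lemma singletonNotTDS {H : SimpleGraph V} (z : V) :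
    ¬ isTotalDominatingSet H ({z} : Finset V) := by
  intro h
  obtain ⟨u, hu, hadj⟩ := h z
  rw [Finset.mem_singleton] at hu
  exact H.loopless.irrefl z (hu ▸ hadj)

lemma existsNeighbor {G : SimpleGraph V} [Fintype V] (hG : G.Connected)
    (hcard : 2 ≤ Fintype.card V) (v : V) : ∃ u, G.Adj u v := by
  haveI : Nontrivial V := Fintype.one_lt_card_iff_nontrivial.mp hcard
  obtain ⟨w, hw⟩ := exists_ne v
  obtain ⟨p⟩ := hG.preconnected v w
  cases p with
  | nil => exact absurd rfl hw
  | cons h _ => exact ⟨_, h.symm⟩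

lemma walkPattern {G : SimpleGraph V} :
    ∀ {u v : V} (_ : G.Walk u v), ¬ G.Adj u v → u ≠ v →
      ∃ x y z, G.Adj x y ∧ G.Adj y z ∧ ¬ G.Adj x z ∧ x ≠ z := by
  intro u v p
  induction p with
  | nil => intro _ hne; exact absurd rfl hne
  | @cons a b c h p ih =>
    intro hna hne
    by_cases h2 : G.Adj b c
    · exact ⟨a, b, c, h, h2, hna, hne⟩
    · by_cases h3 : b = c
      · exact absurd (h3 ▸ h) hna
      · exact ih h2 h3

lemma existsIndepDom [Fintype V] (G : SimpleGraph V) {a c : V} (hne : a ≠ c)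
    (hnadj : ¬ G.Adj a c) :
    ∃ I : Finset V, a ∈ I ∧ c ∈ I ∧ (∀ u ∈ I, ∀ v ∈ I, ¬ G.Adj u v) ∧
      (∀ g ∉ I, ∃ v ∈ I, G.Adj v g) := by
  classical
  set P : Finset V → Prop := fun J => a ∈ J ∧ c ∈ J ∧ ∀ u ∈ J, ∀ v ∈ J, ¬ G.Adj u v with hP
  have hpair : P {a, c} := by
    refine ⟨by simp, by simp, ?_⟩
    intro u hu v hv
    simp only [Finset.mem_insert, Finset.mem_singleton] at hu hv
    rcases hu with rfl | rfl <;> rcases hv with rfl | rfl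
    · exact G.loopless.irrefl _
    · exact hnadj
    · exact fun h => hnadj h.symm
    · exact G.loopless.irrefl _
  have hfil : ({a, c} : Finset V) ∈ Finset.univ.filter P :=
    Finset.mem_filter.mpr ⟨Finset.mem_univ _, hpair⟩
  obtain ⟨I, hImem, hImax⟩ :=
    Finset.exists_max_image (Finset.univ.filter P) Finset.card ⟨_, hfil⟩
  rw [Finset.mem_filter] at hImem
  obtain ⟨-, haI, hcI, hind⟩ := hImem
  refine ⟨I, haI, hcI, hind, ?_⟩
  intro g hg
  by_contra hcon
  push_neg at hcon
  have hPg : P (insert g I) := by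
    refine ⟨Finset.mem_insert_of_mem haI, Finset.mem_insert_of_mem hcI, ?_⟩
    intro u hu v hv
    rcases Finset.mem_insert.mp hu with rfl | hu' <;>
      rcases Finset.mem_insert.mp hv with rfl | hv'
    · exact G.loopless.irrefl _
    · exact fun hadj => hcon v hv' hadj.symm
    · exact hcon u hu'
    · exact hind u hu' v hv'
  have hle := hImax (insert g I) (Finset.mem_filter.mpr ⟨Finset.mem_univ _, hPg⟩)
  rw [Finset.card_insert_of_notMem hg] at hle
  omega

variable {α β : Type*}

lemma lexAdj {G : SimpleGraph α} {F : SimpleGraph β} {x y : α × β} :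
    (lexProd G F).Adj x y ↔ G.Adj x.1 y.1 ∨ (x.1 = y.1 ∧ F.Adj x.2 y.2) := Iff.rfl

/-- T × {f₀} is a minimal TDS of the lexicographic product when T is a minimal
TDS of `G`. -/
lemma layerMinimal (G : SimpleGraph α) (F : SimpleGraph β) (f₀ : β) {T : Finset α}
    (hT : isMinimalTotalDominatingSet G T) :
    isMinimalTotalDominatingSet (lexProd G F) (T.image (fun g => (g, f₀))) := by
  have htds : isTotalDominatingSet (lexProd G F) (T.image (fun g => (g, f₀))) := by
    rintro ⟨g, f⟩
    obtain ⟨t, ht, hadj⟩ := hT.1 g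
    exact ⟨(t, f₀), Finset.mem_image_of_mem _ ht, Or.inl hadj⟩
  refine minimalOfWitness htds ?_
  rintro x hx
  obtain ⟨t, ht, rfl⟩ := Finset.mem_image.mp hx
  obtain ⟨gs, hgs⟩ := notTDSElim (hT.2 _ (Finset.erase_ssubset ht))
  refine ⟨(gs, f₀), ?_⟩
  rintro ⟨u, s⟩ hus hneq hadj
  obtain ⟨u', hu', he⟩ := Finset.mem_image.mp hus
  obtain ⟨rfl, rfl⟩ : u' = u ∧ f₀ = s := ⟨congrArg Prod.fst he, congrArg Prod.snd he⟩
  rcases hadj with h' | ⟨h1, h2⟩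
  · refine hgs u' (Finset.mem_erase.mpr ⟨?_, hu'⟩) h'
    intro e
    exact hneq (by rw [e])
  · exact F.loopless.irrefl _ h2

/-- If `I` is an independent dominating set of `G` and `T` a minimal TDS of `F`,
then `I ×ˢ T` is a minimal TDS of the lexicographic product. -/
lemma indepDomMinimal (G : SimpleGraph α) (F : SimpleGraph β) {I : Finset α} {T : Finset β}
    (hind : ∀ u ∈ I, ∀ v ∈ I, ¬ G.Adj u v) (hdom : ∀ g ∉ I, ∃ v ∈ I, G.Adj v g)
    (hT : isMinimalTotalDominatingSet F T) :
    isMinimalTotalDominatingSet (lexProd G F) (I ×ˢ T) := by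
  have htds : isTotalDominatingSet (lexProd G F) (I ×ˢ T) := by
    rintro ⟨g, f⟩
    obtain ⟨t, ht, htf⟩ := hT.1 f
    by_cases hg : g ∈ I
    · exact ⟨(g, t), Finset.mem_product.mpr ⟨hg, ht⟩, Or.inr ⟨rfl, htf⟩⟩
    · obtain ⟨v, hv, hadj⟩ := hdom g hg
      exact ⟨(v, t), Finset.mem_product.mpr ⟨hv, ht⟩, Or.inl hadj⟩
  refine minimalOfWitness htds ?_
  rintro ⟨v, t⟩ hx
  rw [Finset.mem_product] at hx
  obtain ⟨fs, hfs⟩ := notTDSElim (hT.2 _ (Finset.erase_ssubset hx.2))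
  refine ⟨(v, fs), ?_⟩
  rintro ⟨u, s⟩ hus hneq hadj
  rw [Finset.mem_product] at hus
  rcases hadj with h' | ⟨h1, h2⟩
  · exact hind u hus.1 v hx.1 h'
  · refine hfs s (Finset.mem_erase.mpr ⟨?_, hus.2⟩) h2
    intro e
    simp only at h1
    exact hneq (by rw [h1, e])

/-- When `F` has an isolated vertex, a set is a TDS of the product iff its
projection is a TDS of `G`. -/
lemma projTDS {G : SimpleGraph α} {F : SimpleGraph β} {b₀ : β}
    (hb₀ : ∀ b', ¬ F.Adj b₀ b') {S : Finset (α × β)} :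
    isTotalDominatingSet (lexProd G F) S ↔ isTotalDominatingSet G (S.image Prod.fst) := by
  constructor
  · intro h g
    obtain ⟨⟨u, s⟩, hus, hadj⟩ := h (g, b₀)
    rcases hadj with h' | ⟨h1, h2⟩
    · exact ⟨u, Finset.mem_image_of_mem _ hus, h'⟩
    · exact absurd h2.symm (hb₀ s)
  · rintro h ⟨g, f⟩
    obtain ⟨u, hu, hadj⟩ := h g
    obtain ⟨x, hx, hxu⟩ := Finset.mem_image.mp hu
    exact ⟨x, hx, Or.inl (by rw [hxu]; exact hadj)⟩

lemma projMinimal {G : SimpleGraph α} {F : SimpleGraph β} {b₀ : β}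
    (hb₀ : ∀ b', ¬ F.Adj b₀ b') {S : Finset (α × β)}
    (hS : isMinimalTotalDominatingSet (lexProd G F) S) :
    isMinimalTotalDominatingSet G (S.image Prod.fst) ∧
      (S.image Prod.fst).card = S.card := by
  have hinj : Set.InjOn Prod.fst (S : Set (α × β)) := by
    intro x hxS y hyS hxy
    by_contra hne
    have hyS' : y ∈ S := hyS
    have himg : (S.erase y).image Prod.fst = S.image Prod.fst := by
      apply Finset.Subset.antisymm
      · exact Finset.image_subset_image (Finset.erase_subset _ _)
      · intro p hp
        obtain ⟨z, hz, rfl⟩ := Finset.mem_image.mp hp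
        by_cases hzy : z = y
        · exact Finset.mem_image.mpr ⟨x, Finset.mem_erase.mpr ⟨hne, hxS⟩, by rw [hxy, hzy]⟩
        · exact Finset.mem_image.mpr ⟨z, Finset.mem_erase.mpr ⟨hzy, hz⟩, rfl⟩
    have : isTotalDominatingSet (lexProd G F) (S.erase y) := by
      rw [projTDS hb₀, himg, ← projTDS hb₀]
      exact hS.1
    exact hS.2 _ (Finset.erase_ssubset hyS') this
  have hcard : (S.image Prod.fst).card = S.card := Finset.card_image_of_injOn hinj
  refine ⟨⟨(projTDS hb₀).mp hS.1, ?_⟩, hcard⟩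
  intro D' hD' hd
  set S' : Finset (α × β) := S.filter (fun x => x.1 ∈ D') with hS'
  have himg : S'.image Prod.fst = D' := by
    apply Finset.Subset.antisymm
    · intro p hp
      obtain ⟨z, hz, rfl⟩ := Finset.mem_image.mp hp
      exact (Finset.mem_filter.mp hz).2
    · intro p hp
      obtain ⟨z, hz, rfl⟩ := Finset.mem_image.mp (hD'.subset hp)
      exact Finset.mem_image.mpr ⟨z, Finset.mem_filter.mpr ⟨hz, hp⟩, rfl⟩
  have hS'tds : isTotalDominatingSet (lexProd G F) S' := by
    rw [projTDS hb₀, himg]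
    exact hd
  have hss : S' ⊂ S := by
    refine Finset.ssubset_iff_subset_ne.mpr ⟨Finset.filter_subset _ _, ?_⟩
    obtain ⟨q, hq1, hq2⟩ := Finset.exists_of_ssubset hD'
    obtain ⟨z, hz, rfl⟩ := Finset.mem_image.mp hq1
    intro he
    have : z ∈ S' := he ▸ hz
    exact hq2 (Finset.mem_filter.mp this).2
  exact hS.2 _ hss hS'tds

lemma topPairTDS {F : SimpleGraph β} {x y : α × β} (hne : x.1 ≠ y.1) :
    isTotalDominatingSet (lexProd (⊤ : SimpleGraph α) F) {x, y} := by
  rintro ⟨g, f⟩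
  by_cases hg : x.1 = g
  · refine ⟨y, by simp, Or.inl ?_⟩
    exact (SimpleGraph.top_adj _ _).mpr (fun e => hne (hg.trans e.symm))
  · exact ⟨x, by simp, Or.inl ((SimpleGraph.top_adj _ _).mpr hg)⟩

lemma topPairMinimal {F : SimpleGraph β} {x y : α × β} (hne : x.1 ≠ y.1) :
    isMinimalTotalDominatingSet (lexProd (⊤ : SimpleGraph α) F) {x, y} := by
  refine minimalOfWitness (topPairTDS hne) ?_
  intro z hz
  rw [Finset.mem_insert, Finset.mem_singleton] at hz
  rcases hz with rfl | rfl
  · refine ⟨y, ?_⟩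
    intro u hu hne' hadj
    rw [Finset.mem_insert, Finset.mem_singleton] at hu
    rcases hu with rfl | rfl
    · exact hne' rfl
    · exact (lexProd (⊤ : SimpleGraph α) F).loopless.irrefl _ hadj
  · refine ⟨x, ?_⟩
    intro u hu hne' hadj
    rw [Finset.mem_insert, Finset.mem_singleton] at hu
    rcases hu with rfl | rfl
    · exact (lexProd (⊤ : SimpleGraph α) F).loopless.irrefl _ hadj
    · exact hne' rfl

/-- In `⊤[F]` with `F` well totally dominated having a TDS of size 2, every
minimal TDS has cardinality 2. -/
lemma topMinimalCardTwo {F : SimpleGraph β} [Nonempty α] [Nonempty β]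
    (hWF : WellTotalDominated F) {D : Finset β}
    (hD : isTotalDominatingSet F D) (hDcard : D.card = 2)
    {S : Finset (α × β)}
    (hS : isMinimalTotalDominatingSet (lexProd (⊤ : SimpleGraph α) F) S) :
    S.card = 2 := by
  have hDmin : isMinimalTotalDominatingSet F D := by
    refine ⟨hD, fun D' hsub htd => ?_⟩
    have h1 := twoLeCardTDS htd
    have h2 := Finset.card_lt_card hsub
    omega
  by_cases hxy : ∃ x ∈ S, ∃ y ∈ S, x.1 ≠ y.1
  · obtain ⟨x, hxS, y, hyS, hne⟩ := hxy
    have hpair := topPairTDS (F := F) hne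
    have hsub : ({x, y} : Finset (α × β)) ⊆ S := by
      intro u hu
      rw [Finset.mem_insert, Finset.mem_singleton] at hu
      rcases hu with rfl | rfl
      · exact hxS
      · exact hyS
    have heq : ({x, y} : Finset (α × β)) = S := by
      by_contra hc
      exact hS.2 _ (Finset.ssubset_iff_subset_ne.mpr ⟨hsub, hc⟩) hpair
    rw [← heq, Finset.card_pair (fun e => hne (by rw [e]))]
  · push_neg at hxy
    obtain ⟨x₀, hx₀⟩ : S.Nonempty := by
      obtain ⟨u, hu, -⟩ := hS.1 (Classical.arbitrary (α × β))
      exact ⟨u, hu⟩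
    set T : Finset β := S.image Prod.snd with hT
    have hfst : ∀ x ∈ S, x.1 = x₀.1 := fun x hx => hxy x hx x₀ hx₀
    have htdsT : isTotalDominatingSet F T := by
      intro f
      obtain ⟨⟨u, s⟩, hus, hadj⟩ := hS.1 (x₀.1, f)
      rcases hadj with h' | ⟨h1, h2⟩
      · exact absurd (hfst _ hus) ((SimpleGraph.top_adj _ _).mp h')
      · exact ⟨s, Finset.mem_image_of_mem _ hus, h2⟩
    have hinj : Set.InjOn Prod.snd (S : Set (α × β)) := by
      intro x hxS y hyS hxy2
      have : x.1 = y.1 := by rw [hfst x hxS, hfst y hyS]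
      exact Prod.ext this hxy2
    have hcard : T.card = S.card := Finset.card_image_of_injOn hinj
    have hTmin : isMinimalTotalDominatingSet F T := by
      refine ⟨htdsT, fun T' hT' htd' => ?_⟩
      set S' : Finset (α × β) := S.filter (fun x => x.2 ∈ T') with hS'def
      have hS'tds : isTotalDominatingSet (lexProd (⊤ : SimpleGraph α) F) S' := by
        rintro ⟨g, f⟩
        obtain ⟨t', ht', hadjt⟩ := htd' f
        obtain ⟨z, hz, hz2⟩ := Finset.mem_image.mp (hT'.subset ht')
        have hzS' : z ∈ S' := Finset.mem_filter.mpr ⟨hz, by rw [hz2]; exact ht'⟩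
        by_cases hg : g = x₀.1
        · exact ⟨z, hzS', Or.inr ⟨by rw [hfst z hz, hg], by rw [hz2]; exact hadjt⟩⟩
        · refine ⟨z, hzS', Or.inl ?_⟩
          exact (SimpleGraph.top_adj _ _).mpr (by rw [hfst z hz]; exact fun e => hg e.symm)
      have hss : S' ⊂ S := by
        refine Finset.ssubset_iff_subset_ne.mpr ⟨Finset.filter_subset _ _, ?_⟩
        obtain ⟨q, hq1, hq2⟩ := Finset.exists_of_ssubset hT'
        obtain ⟨z, hz, rfl⟩ := Finset.mem_image.mp hq1
        intro he
        have : z ∈ S' := he ▸ hz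
        exact hq2 (Finset.mem_filter.mp this).2
      exact hS.2 _ hss hS'tds
    rw [← hcard, hWF T D hTmin hDmin, hDcard]

end WTDHelpers

/-- `G[F]` is well `γ_t`-dominated iff either `G` is complete and `F` is well
`γ_t`-dominated with `γ_t(F) = 2`, or `G` is well `γ_t`-dominated and `F` has
an isolated vertex. -/
theorem stmt_18 {α β : Type} [Fintype α] [Fintype β]
    (G : SimpleGraph α) (F : SimpleGraph β)
    (hα : 2 ≤ Fintype.card α) (hβ : 2 ≤ Fintype.card β) (hG : G.Connected) :
    WellTotalDominated (lexProd G F) ↔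
      ((G = ⊤ ∧ WellTotalDominated F ∧ totalDomNum F = 2) ∨
       (WellTotalDominated G ∧ ∃ b : β, ∀ b' : β, ¬ F.Adj b b')) := by
  classical
  haveI : Nonempty α := Fintype.card_pos_iff.mp (by omega)
  haveI : Nonempty β := Fintype.card_pos_iff.mp (by omega)
  have hmkinj : ∀ f₀ : β, Function.Injective (fun g : α => (g, f₀)) := by
    intro f₀ a b h
    exact congrArg Prod.fst h
  constructor
  · intro hW
    -- `G` is always well totally dominated
    have hWG : WellTotalDominated G := by
      intro T₁ T₂ h1 h2
      have e1 := layerMinimal G F (Classical.arbitrary β) h1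
      have e2 := layerMinimal G F (Classical.arbitrary β) h2
      have h := hW _ _ e1 e2
      rwa [Finset.card_image_of_injective _ (hmkinj _),
        Finset.card_image_of_injective _ (hmkinj _)] at h
    by_cases hiso : ∃ b : β, ∀ b' : β, ¬ F.Adj b b'
    · exact Or.inr ⟨hWG, hiso⟩
    · push_neg at hiso
      -- `F` has no isolated vertex, hence has a minimal TDS
      have huniv : isTotalDominatingSet F Finset.univ := by
        intro f
        obtain ⟨b', hb'⟩ := hiso f
        exact ⟨b', Finset.mem_univ _, hb'.symm⟩
      obtain ⟨T_F, -, hTF⟩ := existsMinimalTDS _ huniv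
      have hm2 : 2 ≤ T_F.card := twoLeCardTDS hTF.1
      by_cases htop : G = ⊤
      · subst htop
        left
        -- every minimal TDS of `F` has cardinality 2
        have hall : ∀ T : Finset β, isMinimalTotalDominatingSet F T → T.card = 2 := by
          intro T hT
          set g₀ : α := Classical.arbitrary α with hg₀
          have hind : ∀ u ∈ ({g₀} : Finset α), ∀ v ∈ ({g₀} : Finset α),
              ¬ (⊤ : SimpleGraph α).Adj u v := by
            intro u hu v hv
            rw [Finset.mem_singleton] at hu hv
            subst hu; subst hv
            exact (⊤ : SimpleGraph α).loopless.irrefl _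
          have hdom : ∀ g ∉ ({g₀} : Finset α), ∃ v ∈ ({g₀} : Finset α),
              (⊤ : SimpleGraph α).Adj v g := by
            intro g hg
            rw [Finset.mem_singleton] at hg
            exact ⟨g₀, Finset.mem_singleton_self _,
              (SimpleGraph.top_adj _ _).mpr (fun e => hg e.symm)⟩
          have hprod := indepDomMinimal (⊤ : SimpleGraph α) F hind hdom hT
          haveI : Nontrivial α := Fintype.one_lt_card_iff_nontrivial.mp hα
          obtain ⟨g₁, g₂, hg12⟩ := exists_pair_ne α
          have hpair := topPairMinimal (F := F)
            (x := (g₁, Classical.arbitrary β)) (y := (g₂, Classical.arbitrary β)) hg12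
          have h := hW _ _ hprod hpair
          rw [Finset.card_product, Finset.card_singleton, one_mul,
            Finset.card_pair (fun e => hg12 (congrArg Prod.fst e))] at h
          exact h
        refine ⟨rfl, fun D₁ D₂ h1 h2 => by rw [hall _ h1, hall _ h2], ?_⟩
        have h2mem : (2 : ℕ) ∈ {k | ∃ D : Finset β, isTotalDominatingSet F D ∧ D.card = k} :=
          ⟨T_F, hTF.1, hall _ hTF⟩
        refine le_antisymm (Nat.sInf_le h2mem) (le_csInf ⟨2, h2mem⟩ ?_)
        rintro k ⟨D, hD, rfl⟩
        exact twoLeCardTDS hD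
      · exfalso
        -- `G` is not complete : find the pattern a ~ b ~ c, a ≁ c
        have hnc : ∃ u v : α, ¬ G.Adj u v ∧ u ≠ v := by
          by_contra hc
          push_neg at hc
          apply htop
          ext u v
          rw [SimpleGraph.top_adj]
          refine ⟨fun h => h.ne, fun h => ?_⟩
          by_contra hna
          exact h (hc u v hna)
        obtain ⟨u, v, huv, hne⟩ := hnc
        obtain ⟨p⟩ := hG.preconnected u v
        obtain ⟨a, b, c, hab, hbc, hac, hace⟩ := walkPattern p huv hne
        obtain ⟨I, haI, hcI, hind, hdom⟩ := existsIndepDom G hace hac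
        have hProd := indepDomMinimal G F hind hdom hTF
        -- a small TDS of G
        choose n hn using (fun w => existsNeighbor hG hα w)
        set SG : Finset α := I ∪ {b} ∪ (I \ {a, c}).image n with hSG
        have hSGtds : isTotalDominatingSet G SG := by
          intro g
          by_cases hgI : g ∈ I
          · by_cases hga : g = a
            · subst hga
              exact ⟨b, by simp [hSG], hab.symm⟩
            · by_cases hgc : g = c
              · subst hgc
                exact ⟨b, by simp [hSG], hbc⟩
              · have hgmem : g ∈ I \ ({a, c} : Finset α) :=
                  Finset.mem_sdiff.mpr ⟨hgI, by simp [hga, hgc]⟩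
                refine ⟨n g, ?_, hn g⟩
                simp only [hSG, Finset.mem_union]
                exact Or.inr (Finset.mem_image_of_mem _ hgmem)
          · obtain ⟨w, hwI, hadj⟩ := hdom g hgI
            exact ⟨w, by simp [hSG, hwI], hadj⟩
        obtain ⟨T', hT'sub, hT'⟩ := existsMinimalTDS _ hSGtds
        have h1 := hW _ _ hProd (layerMinimal G F (Classical.arbitrary β) hT')
        rw [Finset.card_product, Finset.card_image_of_injective _ (hmkinj _)] at h1
        -- h1 : I.card * T_F.card = T'.card
        have hIcard : 2 ≤ I.card := Finset.one_lt_card.mpr ⟨a, haI, c, hcI, hace⟩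
        have hT'le : T'.card ≤ SG.card := Finset.card_le_card hT'sub
        have hSGle : SG.card ≤ I.card + 1 + (I \ ({a, c} : Finset α)).card := by
          calc SG.card ≤ (I ∪ {b}).card + ((I \ ({a, c} : Finset α)).image n).card :=
                Finset.card_union_le _ _
            _ ≤ (I.card + 1) + (I \ ({a, c} : Finset α)).card := by
                have e1 : (I ∪ {b}).card ≤ I.card + 1 := by
                  have := Finset.card_union_le I ({b} : Finset α)
                  simpa using this
                exact Nat.add_le_add e1 (Finset.card_image_le)
        have hsd : (I \ ({a, c} : Finset α)).card = I.card - 2 := by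
          rw [Finset.card_sdiff_of_subset (by
            intro z hz
            rw [Finset.mem_insert, Finset.mem_singleton] at hz
            rcases hz with rfl | rfl
            · exact haI
            · exact hcI), Finset.card_pair hace]
        have hkey : I.card * 2 ≤ T'.card := by
          rw [← h1]
          exact Nat.mul_le_mul_left _ hm2
        omega
  · rintro (⟨rfl, hWF, hγ⟩ | ⟨hWG, b₀, hb₀⟩)
    · -- case (i) : G = ⊤, F well totally dominated with γ_t(F) = 2
      have h2mem : (2 : ℕ) ∈ {k | ∃ D : Finset β, isTotalDominatingSet F D ∧ D.card = k} := by
        rw [← hγ]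
        apply Nat.sInf_mem
        by_contra hemp
        rw [Set.not_nonempty_iff_eq_empty] at hemp
        rw [totalDomNum, hemp, Nat.sInf_empty] at hγ
        omega
      obtain ⟨D, hD, hDcard⟩ := h2mem
      intro S₁ S₂ h1 h2
      rw [topMinimalCardTwo hWF hD hDcard h1, topMinimalCardTwo hWF hD hDcard h2]
    · -- case (ii) : G well totally dominated, F has an isolated vertex
      intro S₁ S₂ h1 h2
      obtain ⟨m1, c1⟩ := projMinimal hb₀ h1
      obtain ⟨m2, c2⟩ := projMinimal hb₀ h2
      rw [← c1, ← c2]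
      exact hWG _ _ m1 m2
end
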